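/- arXiv:1605.02981 — 4 statements merged into one kernel-verified Lean document; each statement's English description precedes it below -/
import Mathlib

section
/- For every m ≥ 2, R_m − R_{m−1} ∈ {−1, 0}: increasing by one the number of lives of a single fixed item either leaves the total number of heaps unchanged or decreases it by exactly one. -/
open MeasureTheory ProbabilityTheory Filter Topology
open scoped ENNReal NNReal

namespace HeapPatience

/-- Decrement by one the number of lives of the (first) alive particle with label `x`. -/
noncomputable def decrementAt : List (ℝ × ℕ) → ℝ → List (ℝ × ℕ)
  | [], _ => []
  | p :: rest, x =>
      if p.1 = x ∧ 0 < p.2 then (p.1, p.2 - 1) :: rest else p :: decrementAt rest x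

/-- One step of the heap patience sorting algorithm, where `acc = (state, number of roots)`:
the new item is attached as a child of the alive particle (a particle with at least one
remaining life) having the largest label smaller than the label of the item, and that
particle loses one life; if there is no such particle, a new root (tree) is created. -/
noncomputable def step (acc : List (ℝ × ℕ) × ℕ) (item : ℝ × ℕ) : List (ℝ × ℕ) × ℕ :=
  match (acc.1.filter fun p => decide (0 < p.2 ∧ p.1 < item.1)).argmax Prod.fst with
  | none => (item :: acc.1, acc.2 + 1)
  | some q => (item :: decrementAt acc.1 q.1, acc.2)

/-- Run the heap patience sorting algorithm on the items `(label, lives)` in order; returns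
the final state (the particles with their remaining lives) and the number of roots created. -/
noncomputable def run (items : List (ℝ × ℕ)) : List (ℝ × ℕ) × ℕ :=
  items.foldl step ([], 0)

/-- `R items` : the number of heaps (trees) produced by the heap patience sorting
algorithm applied to the finite sequence `items` of pairs `(label, number of lives)`. -/
noncomputable def R (items : List (ℝ × ℕ)) : ℕ := (run items).2

/-- `D items` : after running the algorithm, the number of dead particles whose label is
smaller than the label of every alive particle, i.e. the number of leading zeros of the
label-ordered vector of remaining lives. -/
noncomputable def D (items : List (ℝ × ℕ)) : ℕ :=
  ((run items).1.filter fun p =>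
      decide (p.2 = 0 ∧ ∀ q ∈ (run items).1, 0 < q.2 → p.1 < q.1)).length

/-- `Rn U ν n ω` : the random number of heaps `𝐑(n)` needed to sort the first `n`
random items `(U i ω, ν i ω)`. -/
noncomputable def Rn {Ω : Type} (U : ℕ → Ω → ℝ) (ν : ℕ → Ω → ℕ) (n : ℕ) (ω : Ω) : ℕ :=
  R ((List.range n).map fun i => (U i ω, ν i ω))

/-- `Dn U ν n ω` : the random variable `D_n`, the number of dead items whose label is
smaller than the label of every alive item after sorting the first `n` random items. -/
noncomputable def Dn {Ω : Type} (U : ℕ → Ω → ℝ) (ν : ℕ → Ω → ℕ) (n : ℕ) (ω : Ω) : ℕ :=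
  D ((List.range n).map fun i => (U i ω, ν i ω))

/-- The uniform probability measure on the interval `(0,1)`. -/
noncomputable def unif01 : Measure ℝ := volume.restrict (Set.Ioo 0 1)


section Lemmas

lemma decrementAt_cons (p : ℝ × ℕ) (rest : List (ℝ × ℕ)) (x : ℝ) :
    decrementAt (p :: rest) x =
      if p.1 = x ∧ 0 < p.2 then (p.1, p.2 - 1) :: rest else p :: decrementAt rest x := rfl

lemma decrementAt_fst (l : List (ℝ × ℕ)) (x : ℝ) :
    (decrementAt l x).map Prod.fst = l.map Prod.fst := by
  induction l with
  | nil => rfl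
  | cons p rest ih =>
    rw [decrementAt_cons]
    split <;> simp [ih]

lemma decrementAt_append_right (A B : List (ℝ × ℕ)) (x : ℝ)
    (h : ∀ a ∈ A, a.1 ≠ x) :
    decrementAt (A ++ B) x = A ++ decrementAt B x := by
  induction A with
  | nil => rfl
  | cons p rest ih =>
    have hp : p.1 ≠ x := h p (by simp)
    rw [List.cons_append, decrementAt_cons, if_neg (by tauto), List.cons_append,
      ih (fun a ha => h a (by simp [ha]))]

lemma decrementAt_eq (A B : List (ℝ × ℕ)) (x : ℝ) (c : ℕ)
    (h : ∀ a ∈ A, a.1 ≠ x) :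
    decrementAt (A ++ (x, c + 1) :: B) x = A ++ (x, c) :: B := by
  rw [decrementAt_append_right _ _ _ h, decrementAt_cons, if_pos (by simp)]; rfl

lemma dec_pair (p q : List (ℝ × ℕ)) (x z : ℝ) (hz : z ≠ x)
    (hnd : ((p ++ q).map Prod.fst).Nodup)
    (m : ℝ × ℕ) (hm : m ∈ p ∨ m ∈ q) (hmz : m.1 = z) (hma : 0 < m.2) :
    ∃ p' q', ∀ c' : ℕ, decrementAt (p ++ (x, c') :: q) z = p' ++ (x, c') :: q' := by
  obtain ⟨d, hd⟩ : ∃ d, m.2 = d + 1 := ⟨m.2 - 1, (Nat.succ_pred_eq_of_pos hma).symm⟩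
  have hm' : m = (z, d + 1) := by rw [← hmz, ← hd]
  rcases hm with hm | hm
  · obtain ⟨a, b, rfl⟩ := List.append_of_mem hm
    have hnda : ∀ e ∈ a, e.1 ≠ z := by
      intro e he hez
      have h0 : ((a.map Prod.fst ++ z :: b.map Prod.fst) ++ q.map Prod.fst).Nodup := by
        simpa [hm'] using hnd
      have h2 := h0.of_append_left
      rw [List.nodup_append] at h2
      exact h2.2.2 _ (List.mem_map_of_mem (f := Prod.fst) he) _ (by simp) hez
    refine ⟨a ++ (z, d) :: b, q, fun c' => ?_⟩
    have heq : (a ++ m :: b) ++ (x, c') :: q = a ++ (z, d + 1) :: (b ++ (x, c') :: q) := by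
      simp [hm']
    rw [heq, decrementAt_eq _ _ _ _ hnda]
    simp
  · obtain ⟨a, b, rfl⟩ := List.append_of_mem hm
    have hnd' : (p.map Prod.fst ++ (a.map Prod.fst ++ z :: b.map Prod.fst)).Nodup := by
      simpa [hm'] using hnd
    have hp_ne : ∀ e ∈ p, e.1 ≠ z := by
      intro e he hez
      exact (List.disjoint_of_nodup_append hnd') (hez ▸ List.mem_map_of_mem (f := Prod.fst) he) (by simp)
    have ha_ne : ∀ e ∈ a, e.1 ≠ z := by
      intro e he hez
      have h2 := hnd'.of_append_right
      rw [List.nodup_append] at h2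
      exact h2.2.2 _ (List.mem_map_of_mem (f := Prod.fst) he) _ (by simp) hez
    refine ⟨p, a ++ (z, d) :: b, fun c' => ?_⟩
    have heq : p ++ (x, c') :: (a ++ m :: b) = (p ++ (x, c') :: a) ++ (z, d + 1) :: b := by
      simp [hm']
    rw [heq, decrementAt_eq]
    · simp
    · intro e he
      rcases List.mem_append.mp he with he | he
      · exact hp_ne e he
      · rcases List.mem_cons.mp he with rfl | he
        · exact fun h => hz h.symm
        · exact ha_ne e he

lemma dec_decomp (l : List (ℝ × ℕ)) (hnd : (l.map Prod.fst).Nodup)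
    (m : ℝ × ℕ) (hm : m ∈ l) (hma : 0 < m.2) :
    ∃ A B d, l = A ++ (m.1, d + 1) :: B ∧ decrementAt l m.1 = A ++ (m.1, d) :: B := by
  obtain ⟨d, hd⟩ : ∃ d, m.2 = d + 1 := ⟨m.2 - 1, (Nat.succ_pred_eq_of_pos hma).symm⟩
  have hm' : m = (m.1, d + 1) := by rw [← hd]
  obtain ⟨a, b, rfl⟩ := List.append_of_mem hm
  have hnda : ∀ e ∈ a, e.1 ≠ m.1 := by
    intro e he hez
    have h0 : (a.map Prod.fst ++ m.1 :: b.map Prod.fst).Nodup := by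
      simpa using hnd
    rw [List.nodup_append] at h0
    exact h0.2.2 _ (List.mem_map_of_mem (f := Prod.fst) he) _ (by simp) hez
  refine ⟨a, b, d, by rw [← hm'], ?_⟩
  conv_lhs => rw [hm']
  exact decrementAt_eq _ _ _ _ hnda

lemma argmax_eq_some (l : List (ℝ × ℕ)) (hn : (l.map Prod.fst).Nodup)
    (m : ℝ × ℕ) (hm : m ∈ l) (hmax : ∀ a ∈ l, a.1 ≤ m.1) :
    l.argmax Prod.fst = some m := by
  obtain ⟨m', hm'⟩ : ∃ m', l.argmax Prod.fst = some m' := by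
    cases h : l.argmax Prod.fst with
    | none => simp [List.argmax_eq_none.mp h] at hm
    | some m' => exact ⟨m', rfl⟩
  have hmem' : m' ∈ l.argmax Prod.fst := Option.mem_def.mpr hm'
  have h1 : m.1 ≤ m'.1 := List.le_of_mem_argmax hm hmem'
  have h2 : m'.1 ≤ m.1 := hmax m' (List.argmax_mem hmem')
  have heq : m = m' := List.inj_on_of_nodup_map hn hm (List.argmax_mem hmem') (le_antisymm h1 h2)
  rw [hm', heq]

lemma argmax_congr (l₁ l₂ : List (ℝ × ℕ)) (h : l₁.map Prod.fst = l₂.map Prod.fst)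
    (hn : (l₁.map Prod.fst).Nodup) (m₂ : ℝ × ℕ) (h₂ : l₂.argmax Prod.fst = some m₂) :
    ∃ m₁ ∈ l₁, m₁.1 = m₂.1 ∧ l₁.argmax Prod.fst = some m₁ := by
  have hm₂l : m₂ ∈ l₂ := List.argmax_mem (Option.mem_def.mpr h₂)
  have hmem : m₂.1 ∈ l₁.map Prod.fst := by
    rw [h]; exact List.mem_map_of_mem (f := Prod.fst) hm₂l
  obtain ⟨m₁, hm₁, hfst⟩ := List.mem_map.mp hmem
  refine ⟨m₁, hm₁, hfst, argmax_eq_some l₁ hn m₁ hm₁ ?_⟩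
  intro a ha
  have hamem : a.1 ∈ l₂.map Prod.fst := by rw [← h]; exact List.mem_map_of_mem (f := Prod.fst) ha
  obtain ⟨b, hb, hbfst⟩ := List.mem_map.mp hamem
  rw [hfst, ← hbfst]
  exact List.le_of_mem_argmax hb (Option.mem_def.mpr h₂)

lemma step_eq_none (A : List (ℝ × ℕ) × ℕ) (it : ℝ × ℕ)
    (h : (A.1.filter fun p => decide (0 < p.2 ∧ p.1 < it.1)).argmax Prod.fst = none) :
    step A it = (it :: A.1, A.2 + 1) := by
  unfold step; rw [h]

lemma step_eq_some (A : List (ℝ × ℕ) × ℕ) (it m : ℝ × ℕ)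
    (h : (A.1.filter fun p => decide (0 < p.2 ∧ p.1 < it.1)).argmax Prod.fst = some m) :
    step A it = (it :: decrementAt A.1 m.1, A.2) := by
  unfold step; rw [h]

lemma step_fst (A : List (ℝ × ℕ) × ℕ) (it : ℝ × ℕ) :
    (step A it).1.map Prod.fst = it.1 :: A.1.map Prod.fst := by
  unfold step
  split <;> simp [decrementAt_fst]

/-- The coupling invariant between the two runs. -/
def Inv (A B : List (ℝ × ℕ) × ℕ) : Prop :=
  A.1.map Prod.fst = B.1.map Prod.fst ∧
  ((A.1 = B.1 ∧ A.2 ≤ B.2 ∧ B.2 ≤ A.2 + 1) ∨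
   (A.2 = B.2 ∧ ∃ p q x c, A.1 = p ++ (x, c + 1) :: q ∧ B.1 = p ++ (x, c) :: q))

end Lemmas


lemma step_inv (s t : List (ℝ × ℕ)) (rs rt : ℕ) (it : ℝ × ℕ)
    (hnd : (s.map Prod.fst).Nodup)
    (hI : Inv (s, rs) (t, rt)) : Inv (step (s, rs) it) (step (t, rt) it) := by
  obtain ⟨hmap, hcase⟩ := hI
  replace hmap : s.map Prod.fst = t.map Prod.fst := hmap
  refine ⟨?_, ?_⟩
  · rw [step_fst, step_fst]
    show it.1 :: s.map Prod.fst = it.1 :: t.map Prod.fst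
    rw [hmap]
  rcases hcase with ⟨hst, h1, h2⟩ | ⟨hr, pl, ql, x, c, hs, ht⟩
  · replace hst : s = t := hst
    replace h1 : rs ≤ rt := h1
    replace h2 : rt ≤ rs + 1 := h2
    subst hst
    cases h : (s.filter fun r => decide (0 < r.2 ∧ r.1 < it.1)).argmax Prod.fst with
    | none =>
      rw [step_eq_none _ it h, step_eq_none _ it h]
      exact Or.inl ⟨rfl, Nat.add_le_add_right h1 1, Nat.add_le_add_right h2 1⟩
    | some m =>
      rw [step_eq_some _ it m h, step_eq_some _ it m h]
      exact Or.inl ⟨rfl, h1, h2⟩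
  · replace hr : rs = rt := hr
    replace hs : s = pl ++ (x, c + 1) :: ql := hs
    replace ht : t = pl ++ (x, c) :: ql := ht
    subst hs ht hr
    set Q : ℝ × ℕ → Bool := fun r => decide (0 < r.2 ∧ r.1 < it.1) with hQ
    have hnd' : (pl.map Prod.fst ++ x :: ql.map Prod.fst).Nodup := by simpa using hnd
    have hxp : ∀ a ∈ pl, a.1 ≠ x := by
      intro a ha hax
      exact (List.disjoint_of_nodup_append hnd')
        (hax ▸ List.mem_map_of_mem (f := Prod.fst) ha) (by simp)
    have hxq : ∀ a ∈ ql, a.1 ≠ x := by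
      intro a ha hax
      have h2 := hnd'.of_append_right
      rw [List.nodup_cons] at h2
      exact h2.1 (hax ▸ List.mem_map_of_mem (f := Prod.fst) ha)
    have hndPQ : ((pl ++ ql).map Prod.fst).Nodup := by
      rw [List.map_append, List.nodup_append]
      rw [List.nodup_append] at hnd'
      exact ⟨hnd'.1, (List.nodup_cons.mp hnd'.2.1).2,
        fun a ha b hb => hnd'.2.2 a ha b (by simp [hb])⟩
    have generic : ∀ m₁ m₂ : ℝ × ℕ, m₁.1 = m₂.1 → (m₂ ∈ pl ∨ m₂ ∈ ql) → m₂.1 ≠ x →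
        0 < m₂.2 →
        ∃ p' q', (it :: decrementAt (pl ++ (x, c + 1) :: ql) m₁.1) = p' ++ (x, c + 1) :: q' ∧
          (it :: decrementAt (pl ++ (x, c) :: ql) m₂.1) = p' ++ (x, c) :: q' := by
      intro m₁ m₂ h12 hmem hne hpos
      obtain ⟨p', q', hdec⟩ := dec_pair pl ql x m₂.1 hne hndPQ m₂ hmem rfl hpos
      exact ⟨it :: p', q', by rw [h12, hdec (c + 1)]; simp, by rw [hdec c]; simp⟩
    by_cases hxy : x < it.1
    · by_cases hc : 0 < c
      · obtain ⟨c', rfl⟩ : ∃ c', c = c' + 1 := ⟨c - 1, (Nat.succ_pred_eq_of_pos hc).symm⟩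
        have hFs : ((pl ++ (x, c' + 1 + 1) :: ql).filter Q)
            = pl.filter Q ++ (x, c' + 1 + 1) :: ql.filter Q := by
          simp [hQ, List.filter_append, List.filter_cons, hxy]
        have hFt : ((pl ++ (x, c' + 1) :: ql).filter Q)
            = pl.filter Q ++ (x, c' + 1) :: ql.filter Q := by
          simp [hQ, List.filter_append, List.filter_cons, hxy]
        cases h : ((pl ++ (x, c' + 1) :: ql).filter Q).argmax Prod.fst with
        | none =>
          exfalso
          have h0 := List.argmax_eq_none.mp h
          rw [hFt] at h0
          simp at h0
        | some m₂ =>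
          have hndFs : (((pl ++ (x, c' + 1 + 1) :: ql).filter Q).map Prod.fst).Nodup :=
            List.Nodup.sublist (List.Sublist.map Prod.fst List.filter_sublist) hnd
          have hmapF : ((pl ++ (x, c' + 1 + 1) :: ql).filter Q).map Prod.fst
              = ((pl ++ (x, c' + 1) :: ql).filter Q).map Prod.fst := by
            rw [hFs, hFt]; simp
          obtain ⟨m₁, hm₁mem, h12, h₁⟩ := argmax_congr _ _ hmapF hndFs m₂ h
          have hm₂F : m₂ ∈ (pl ++ (x, c' + 1) :: ql).filter Q :=
            List.argmax_mem (Option.mem_def.mpr h)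
          rw [List.mem_filter] at hm₂F
          have hQ₂ : 0 < m₂.2 ∧ m₂.1 < it.1 := by simpa [hQ] using hm₂F.2
          by_cases hzx : m₂.1 = x
          · rw [step_eq_some _ it m₁ h₁, step_eq_some _ it m₂ h]
            refine Or.inr ⟨rfl, it :: pl, ql, x, c', ?_, ?_⟩
            · show it :: decrementAt (pl ++ (x, c' + 1 + 1) :: ql) m₁.1
                = (it :: pl) ++ (x, c' + 1) :: ql
              rw [h12, hzx, decrementAt_eq _ _ _ _ hxp]; simp
            · show it :: decrementAt (pl ++ (x, c' + 1) :: ql) m₂.1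
                = (it :: pl) ++ (x, c') :: ql
              rw [hzx, decrementAt_eq _ _ _ _ hxp]; simp
          · have hmem : m₂ ∈ pl ∨ m₂ ∈ ql := by
              rcases List.mem_append.mp hm₂F.1 with h' | h'
              · exact Or.inl h'
              · rcases List.mem_cons.mp h' with h' | h'
                · exact absurd (by rw [h']) hzx
                · exact Or.inr h'
            rw [step_eq_some _ it m₁ h₁, step_eq_some _ it m₂ h]
            obtain ⟨p', q', e1, e2⟩ := generic m₁ m₂ h12 hmem hzx hQ₂.1
            exact Or.inr ⟨rfl, p', q', x, c' + 1, e1, e2⟩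
      · have hc0 : c = 0 := by omega
        subst hc0
        have hFs : ((pl ++ (x, 0 + 1) :: ql).filter Q)
            = pl.filter Q ++ (x, 0 + 1) :: ql.filter Q := by
          simp [hQ, List.filter_append, List.filter_cons, hxy]
        have hFt : ((pl ++ (x, 0) :: ql).filter Q) = pl.filter Q ++ ql.filter Q := by
          simp [hQ, List.filter_append, List.filter_cons]
        have hndFs : (((pl ++ (x, 0 + 1) :: ql).filter Q).map Prod.fst).Nodup :=
          List.Nodup.sublist (List.Sublist.map Prod.fst List.filter_sublist) hnd
        cases h : ((pl ++ (x, 0) :: ql).filter Q).argmax Prod.fst with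
        | none =>
          have hFt0 : pl.filter Q ++ ql.filter Q = ([] : List (ℝ × ℕ)) := by
            rw [← hFt]; exact List.argmax_eq_none.mp h
          rw [List.append_eq_nil_iff] at hFt0
          have h₁ : ((pl ++ (x, 0 + 1) :: ql).filter Q).argmax Prod.fst = some (x, 0 + 1) := by
            rw [hFs, hFt0.1, hFt0.2]
            exact List.argmax_singleton
          rw [step_eq_some _ it (x, 0 + 1) h₁, step_eq_none _ it h]
          refine Or.inl ⟨?_, Nat.le_succ rs, le_refl (rs + 1)⟩
          show it :: decrementAt (pl ++ (x, 0 + 1) :: ql) (x, 0 + 1).1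
            = it :: (pl ++ (x, 0) :: ql)
          rw [show ((x, 0 + 1) : ℝ × ℕ).1 = x from rfl, decrementAt_eq _ _ _ _ hxp]
        | some m₂ =>
          have hm₂F : m₂ ∈ (pl ++ (x, 0) :: ql).filter Q :=
            List.argmax_mem (Option.mem_def.mpr h)
          have hm₂F' : m₂ ∈ pl.filter Q ++ ql.filter Q := by rw [← hFt]; exact hm₂F
          rw [List.mem_filter] at hm₂F
          have hQ₂ : 0 < m₂.2 ∧ m₂.1 < it.1 := by simpa [hQ] using hm₂F.2
          have hmem : m₂ ∈ pl ∨ m₂ ∈ ql := by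
            rcases List.mem_append.mp hm₂F.1 with h' | h'
            · exact Or.inl h'
            · rcases List.mem_cons.mp h' with h' | h'
              · exfalso; rw [h'] at hQ₂; simp at hQ₂
              · exact Or.inr h'
          have hne : m₂.1 ≠ x := by
            rcases hmem with h' | h'
            · exact hxp m₂ h'
            · exact hxq m₂ h'
          have hle : ∀ a ∈ pl.filter Q ++ ql.filter Q, a.1 ≤ m₂.1 := by
            intro a ha
            refine List.le_of_mem_argmax ?_ (Option.mem_def.mpr h)
            rw [hFt]; exact ha
          rcases lt_or_gt_of_ne hne with hlt | hgt
          · have h₁ : ((pl ++ (x, 0 + 1) :: ql).filter Q).argmax Prod.fst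
                = some (x, 0 + 1) := by
              apply argmax_eq_some _ hndFs
              · rw [hFs]; exact List.mem_append.mpr (Or.inr (List.mem_cons_self))
              · intro a ha
                rw [hFs] at ha
                rcases List.mem_append.mp ha with h' | h'
                · exact le_of_lt (lt_of_le_of_lt (hle a (List.mem_append.mpr (Or.inl h'))) hlt)
                · rcases List.mem_cons.mp h' with rfl | h'
                  · exact le_refl _
                  · exact le_of_lt
                      (lt_of_le_of_lt (hle a (List.mem_append.mpr (Or.inr h'))) hlt)
            rw [step_eq_some _ it (x, 0 + 1) h₁, step_eq_some _ it m₂ h]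
            have hndt : ((pl ++ (x, 0) :: ql).map Prod.fst).Nodup := by simpa using hnd'
            obtain ⟨Aa, Bb, d, hdec1, hdec2⟩ := dec_decomp (pl ++ (x, 0) :: ql) hndt m₂
              (by rcases hmem with h' | h'
                  · exact List.mem_append.mpr (Or.inl h')
                  · exact List.mem_append.mpr (Or.inr (List.mem_cons_of_mem _ h'))) hQ₂.1
            refine Or.inr ⟨rfl, it :: Aa, Bb, m₂.1, d, ?_, ?_⟩
            · show it :: decrementAt (pl ++ (x, 0 + 1) :: ql) (x, 0 + 1).1
                = (it :: Aa) ++ (m₂.1, d + 1) :: Bb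
              rw [show ((x, 0 + 1) : ℝ × ℕ).1 = x from rfl, decrementAt_eq _ _ _ _ hxp,
                hdec1]
              simp
            · show it :: decrementAt (pl ++ (x, 0) :: ql) m₂.1 = (it :: Aa) ++ (m₂.1, d) :: Bb
              rw [hdec2]; simp
          · have h₁ : ((pl ++ (x, 0 + 1) :: ql).filter Q).argmax Prod.fst = some m₂ := by
              apply argmax_eq_some _ hndFs
              · rw [hFs]
                rcases List.mem_append.mp hm₂F' with h' | h'
                · exact List.mem_append.mpr (Or.inl h')
                · exact List.mem_append.mpr (Or.inr (List.mem_cons_of_mem _ h'))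
              · intro a ha
                rw [hFs] at ha
                rcases List.mem_append.mp ha with h' | h'
                · exact hle a (List.mem_append.mpr (Or.inl h'))
                · rcases List.mem_cons.mp h' with rfl | h'
                  · exact le_of_lt hgt
                  · exact hle a (List.mem_append.mpr (Or.inr h'))
            rw [step_eq_some _ it m₂ h₁, step_eq_some _ it m₂ h]
            obtain ⟨p', q', e1, e2⟩ := generic m₂ m₂ rfl hmem hne hQ₂.1
            exact Or.inr ⟨rfl, p', q', x, 0, e1, e2⟩
    · have hQmid : ∀ c' : ℕ, Q (x, c') = false := by intro c'; simp [hQ, hxy]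
      have hFs : ((pl ++ (x, c + 1) :: ql).filter Q) = pl.filter Q ++ ql.filter Q := by
        simp [List.filter_append, List.filter_cons, hQmid]
      have hFt : ((pl ++ (x, c) :: ql).filter Q) = pl.filter Q ++ ql.filter Q := by
        simp [List.filter_append, List.filter_cons, hQmid]
      cases h : (pl.filter Q ++ ql.filter Q).argmax Prod.fst with
      | none =>
        rw [step_eq_none _ it
            (show ((pl ++ (x, c + 1) :: ql).filter Q).argmax Prod.fst = none by
              rw [hFs]; exact h),
          step_eq_none _ it
            (show ((pl ++ (x, c) :: ql).filter Q).argmax Prod.fst = none by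
              rw [hFt]; exact h)]
        exact Or.inr ⟨rfl, it :: pl, ql, x, c, by simp, by simp⟩
      | some m₂ =>
        have hmemF : m₂ ∈ pl.filter Q ++ ql.filter Q := List.argmax_mem (Option.mem_def.mpr h)
        have hQ₂ : 0 < m₂.2 ∧ m₂.1 < it.1 := by
          rcases List.mem_append.mp hmemF with h' | h' <;>
            simpa [hQ] using (List.mem_filter.mp h').2
        have hmem : m₂ ∈ pl ∨ m₂ ∈ ql := by
          rcases List.mem_append.mp hmemF with h' | h'
          · exact Or.inl (List.mem_filter.mp h').1
          · exact Or.inr (List.mem_filter.mp h').1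
        have hne : m₂.1 ≠ x := by
          rcases hmem with h' | h'
          · exact hxp m₂ h'
          · exact hxq m₂ h'
        rw [step_eq_some _ it m₂
            (show ((pl ++ (x, c + 1) :: ql).filter Q).argmax Prod.fst = some m₂ by
              rw [hFs]; exact h),
          step_eq_some _ it m₂
            (show ((pl ++ (x, c) :: ql).filter Q).argmax Prod.fst = some m₂ by
              rw [hFt]; exact h)]
        obtain ⟨p', q', e1, e2⟩ := generic m₂ m₂ rfl hmem hne hQ₂.1
        exact Or.inr ⟨rfl, p', q', x, c, e1, e2⟩

lemma foldl_fst (items : List (ℝ × ℕ)) (A : List (ℝ × ℕ) × ℕ) :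
    ((items.foldl step A).1.map Prod.fst)
      = (items.map Prod.fst).reverse ++ A.1.map Prod.fst := by
  induction items generalizing A with
  | nil => simp
  | cons it rest ih =>
    rw [List.foldl_cons, ih]
    simp [step_fst]

lemma foldl_inv (items : List (ℝ × ℕ)) : ∀ A B : List (ℝ × ℕ) × ℕ,
    Inv A B → (items.map Prod.fst ++ A.1.map Prod.fst).Nodup →
    Inv (items.foldl step A) (items.foldl step B) := by
  induction items with
  | nil => intro A B hI _; exact hI
  | cons it rest ih =>
    intro A B hI hnod
    obtain ⟨s, rs⟩ := A
    obtain ⟨t, rt⟩ := B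
    rw [List.foldl_cons, List.foldl_cons]
    have hnod' : (it.1 :: (rest.map Prod.fst ++ s.map Prod.fst)).Nodup := by
      simpa using hnod
    have hndA : (s.map Prod.fst).Nodup := hnod'.of_cons.of_append_right
    refine ih _ _ (step_inv s t rs rt it hndA hI) ?_
    rw [step_fst]
    show (rest.map Prod.fst ++ it.1 :: s.map Prod.fst).Nodup
    exact List.perm_middle.symm.nodup hnod'


/-- Adding one life to a single fixed item decreases the number of heaps
by at most one: for `m ≥ 2`, `R_m - R_(m-1) ∈ {-1, 0}`. -/
theorem R_extra_life_step
    (n : ℕ) (hn : 1 ≤ n) (u : Fin n → ℝ)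
    (hu : ∀ i, u i ∈ Set.Ioo (0 : ℝ) 1) (huinj : Function.Injective u)
    (i₀ : Fin n) (v : Fin n → ℕ) (hv : ∀ i, i ≠ i₀ → 1 ≤ v i)
    (Rm : ℕ → ℕ)
    (hRm : ∀ m : ℕ,
      Rm m = R ((List.finRange n).map fun i => (u i, if i = i₀ then m else v i))) :
    ∀ m : ℕ, 2 ≤ m → Rm m ≤ Rm (m - 1) ∧ Rm (m - 1) ≤ Rm m + 1 := by
  intro m hm
  set g : Fin n → ℝ × ℕ := fun i => (u i, v i) with hg
  obtain ⟨pre, post, hsplit⟩ := List.append_of_mem (List.mem_finRange i₀)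
  have hndfr : (pre ++ i₀ :: post).Nodup := hsplit ▸ List.nodup_finRange n
  have hi₀pre : i₀ ∉ pre := fun hmem =>
    (List.disjoint_of_nodup_append hndfr) hmem (List.mem_cons_self)
  have hi₀post : i₀ ∉ post := (List.nodup_cons.mp hndfr.of_append_right).1
  have hitem : ∀ k : ℕ,
      (List.finRange n).map (fun i => (u i, if i = i₀ then k else v i))
        = pre.map g ++ (u i₀, k) :: post.map g := by
    intro k
    rw [hsplit, List.map_append, List.map_cons]
    congr 1
    · exact List.map_congr_left (fun i hi => by
        have hne : i ≠ i₀ := fun h => hi₀pre (h ▸ hi)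
        simp [hg, hne])
    · congr 1
      · simp
      · exact List.map_congr_left (fun i hi => by
          have hne : i ≠ i₀ := fun h => hi₀post (h ▸ hi)
          simp [hg, hne])
  set Z := (pre.map g).foldl step (([] : List (ℝ × ℕ)), 0) with hZ
  have hZfst : Z.1.map Prod.fst = (pre.map u).reverse := by
    rw [hZ, foldl_fst]
    simp [hg, List.map_map, Function.comp]
  have hm1 : m - 1 + 1 = m := by omega
  have hInv0 : Inv (step Z (u i₀, m)) (step Z (u i₀, m - 1)) := by
    refine ⟨?_, ?_⟩
    · rw [step_fst, step_fst]
    · cases h : (Z.1.filter fun p => decide (0 < p.2 ∧ p.1 < (u i₀, m).1)).argmax Prod.fst with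
      | none =>
        rw [step_eq_none Z (u i₀, m) h, step_eq_none Z (u i₀, m - 1) h]
        refine Or.inr ⟨rfl, [], Z.1, u i₀, m - 1, ?_, ?_⟩
        · show (u i₀, m) :: Z.1 = [] ++ (u i₀, m - 1 + 1) :: Z.1
          rw [hm1]; simp
        · simp
      | some q =>
        rw [step_eq_some Z (u i₀, m) q h, step_eq_some Z (u i₀, m - 1) q h]
        refine Or.inr ⟨rfl, [], decrementAt Z.1 q.1, u i₀, m - 1, ?_, ?_⟩
        · show (u i₀, m) :: decrementAt Z.1 q.1
            = [] ++ (u i₀, m - 1 + 1) :: decrementAt Z.1 q.1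
          rw [hm1]; simp
        · simp
  have hsrc : (pre.map u ++ u i₀ :: post.map u).Nodup := by
    have h0 : ((List.finRange n).map u).Nodup := (List.nodup_finRange n).map huinj
    rw [hsplit] at h0
    simpa using h0
  have hperm : (post.map u ++ u i₀ :: (pre.map u).reverse).Perm
      (pre.map u ++ u i₀ :: post.map u) :=
    (List.perm_middle).trans
      ((List.Perm.cons _ ((List.Perm.append_left _ (List.reverse_perm _)).trans
        List.perm_append_comm)).trans List.perm_middle.symm)
  have hnodup : ((post.map g).map Prod.fst
      ++ (step Z (u i₀, m)).1.map Prod.fst).Nodup := by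
    rw [step_fst, hZfst]
    have hpg : (post.map g).map Prod.fst = post.map u := by
      simp [hg, List.map_map, Function.comp]
    rw [hpg]
    show (post.map u ++ u i₀ :: (pre.map u).reverse).Nodup
    exact (hperm.nodup_iff).mpr hsrc
  have hInvFinal := foldl_inv (post.map g) _ _ hInv0 hnodup
  have hrunA : run ((List.finRange n).map fun i => (u i, if i = i₀ then m else v i))
      = (post.map g).foldl step (step Z (u i₀, m)) := by
    rw [hitem m]; unfold run; rw [List.foldl_append, List.foldl_cons]
  have hrunB : run ((List.finRange n).map fun i => (u i, if i = i₀ then m - 1 else v i))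
      = (post.map g).foldl step (step Z (u i₀, m - 1)) := by
    rw [hitem (m - 1)]; unfold run; rw [List.foldl_append, List.foldl_cons]
  rw [hRm m, hRm (m - 1)]
  unfold R
  rw [hrunA, hrunB]
  obtain ⟨-, hd⟩ := hInvFinal
  rcases hd with ⟨-, h1, h2⟩ | ⟨he, -⟩
  · exact ⟨h1, h2⟩
  · exact ⟨le_of_eq he, by omega⟩

end HeapPatience
end

section
/- If R_m = R_{m−1} for some m ≥ 2, then R_{m'} = R_{m'−1} for every m' ≥ m: once adding an additional life to the fixed item no longer reduces the number of heaps, no further additional lives can reduce it. -/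
open MeasureTheory ProbabilityTheory Filter Topology
open scoped ENNReal NNReal

namespace HeapPatience

/-! ### Auxiliary machinery for the stabilization theorem -/

/-- The labels of a state. -/
def labs (s : List (ℝ × ℕ)) : List ℝ := s.map Prod.fst

/-- The alive particles with label below `u`. -/
noncomputable def fil (s : List (ℝ × ℕ)) (u : ℝ) : List (ℝ × ℕ) :=
  s.filter fun p => decide (0 < p.2 ∧ p.1 < u)

lemma step_none {s : List (ℝ × ℕ)} {c : ℕ} {it : ℝ × ℕ}
    (h : (fil s it.1).argmax Prod.fst = none) :
    step (s, c) it = (it :: s, c + 1) := by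
  unfold fil at h; unfold step; rw [h]

lemma step_some {s : List (ℝ × ℕ)} {c : ℕ} {it : ℝ × ℕ} {q : ℝ × ℕ}
    (h : (fil s it.1).argmax Prod.fst = some q) :
    step (s, c) it = (it :: decrementAt s q.1, c) := by
  unfold fil at h; unfold step; rw [h]

lemma mem_fil {s : List (ℝ × ℕ)} {u : ℝ} {p : ℝ × ℕ} :
    p ∈ fil s u ↔ p ∈ s ∧ 0 < p.2 ∧ p.1 < u := by
  simp [fil, List.mem_filter]

lemma fil_append (l m : List (ℝ × ℕ)) (u : ℝ) :
    fil (l ++ m) u = fil l u ++ fil m u := by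
  simp [fil, List.filter_append]

lemma fil_cons_pos {w : ℝ} {k : ℕ} (r : List (ℝ × ℕ)) {u : ℝ} (h1 : 0 < k) (h2 : w < u) :
    fil ((w, k) :: r) u = (w, k) :: fil r u := by
  simp [fil, List.filter_cons, h1, h2]

lemma fil_cons_neg {w : ℝ} {k : ℕ} (r : List (ℝ × ℕ)) {u : ℝ} (h : ¬(0 < k ∧ w < u)) :
    fil ((w, k) :: r) u = fil r u := by
  simp only [fil, List.filter_cons]
  simp [h]

/-- `t` is `s` with one extra life at (an entry labelled) `w`. -/
def Couple (s t : List (ℝ × ℕ)) (w : ℝ) : Prop :=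
  ∃ l k r, s = l ++ (w, k) :: r ∧ t = l ++ (w, k + 1) :: r

lemma Couple.cons {s t : List (ℝ × ℕ)} {w : ℝ} (h : Couple s t w) (p : ℝ × ℕ) :
    Couple (p :: s) (p :: t) w := by
  obtain ⟨l, k, r, hs, ht⟩ := h
  exact ⟨p :: l, k, r, by simp [hs], by simp [ht]⟩

lemma Couple.labs_eq {s t : List (ℝ × ℕ)} {w : ℝ} (h : Couple s t w) : labs s = labs t := by
  obtain ⟨l, k, r, hs, ht⟩ := h; simp [labs, hs, ht]

lemma labs_decrementAt (s : List (ℝ × ℕ)) (x : ℝ) : labs (decrementAt s x) = labs s := by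
  induction s with
  | nil => rfl
  | cons p rest ih =>
      rw [decrementAt]
      by_cases h : p.1 = x ∧ 0 < p.2
      · simp [h, labs]
      · simp [h, labs] at ih ⊢; exact ih

lemma decrementAt_cons_ne {w x : ℝ} (hne : w ≠ x) (k : ℕ) (r : List (ℝ × ℕ)) :
    decrementAt ((w, k) :: r) x = (w, k) :: decrementAt r x := by
  rw [decrementAt]; simp [hne]

lemma decrementAt_cons_pos {w : ℝ} (k : ℕ) (r : List (ℝ × ℕ)) :
    decrementAt ((w, k + 1) :: r) w = (w, k) :: r := by
  rw [decrementAt]; simp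

lemma decrementAt_append_not_mem {x : ℝ} {l : List (ℝ × ℕ)} (m : List (ℝ × ℕ))
    (hx : x ∉ labs l) : decrementAt (l ++ m) x = l ++ decrementAt m x := by
  induction l with
  | nil => rfl
  | cons p rest ih =>
      simp only [labs, List.map_cons, List.mem_cons] at hx
      push_neg at hx
      simp only [List.cons_append]
      rw [decrementAt]
      have : ¬(p.1 = x ∧ 0 < p.2) := fun hc => hx.1 hc.1.symm
      rw [if_neg this, ih (by simpa [labs] using hx.2)]

lemma Couple.dec_ne {s t : List (ℝ × ℕ)} {w x : ℝ} (h : Couple s t w) (hx : x ≠ w) :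
    Couple (decrementAt s x) (decrementAt t x) w := by
  obtain ⟨l, k, r, hs, ht⟩ := h
  subst hs; subst ht
  induction l with
  | nil =>
      simp only [List.nil_append]
      rw [decrementAt_cons_ne (Ne.symm hx), decrementAt_cons_ne (Ne.symm hx)]
      exact ⟨[], k, decrementAt r x, by simp, by simp⟩
  | cons p l ih =>
      simp only [List.cons_append]
      rw [decrementAt, decrementAt]
      by_cases hp : p.1 = x ∧ 0 < p.2
      · simp only [if_pos hp]
        exact ⟨(p.1, p.2 - 1) :: l, k, r, by simp, by simp⟩
      · simp only [if_neg hp]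
        exact ih.cons p

/-- If `s` has an alive entry labelled `x`, then decrementing at `x` produces a state
coupled with `s` at `x`. -/
lemma couple_dec_self {s : List (ℝ × ℕ)} {x : ℝ}
    (h : ∃ p ∈ s, p.1 = x ∧ 0 < p.2) : Couple (decrementAt s x) s x := by
  induction s with
  | nil => simp at h
  | cons p rest ih =>
      rw [decrementAt]
      by_cases hp : p.1 = x ∧ 0 < p.2
      · simp only [if_pos hp]
        obtain ⟨h1, h2⟩ := hp
        obtain ⟨a, b⟩ := p
        simp only at h1 h2
        subst h1
        exact ⟨[], b - 1, rest, by simp, by simp [Nat.sub_add_cancel h2]⟩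
      · simp only [if_neg hp]
        have : ∃ q ∈ rest, q.1 = x ∧ 0 < q.2 := by
          obtain ⟨q, hq, hq2⟩ := h
          rcases List.mem_cons.mp hq with rfl | hq'
          · exact absurd hq2 hp
          · exact ⟨q, hq', hq2⟩
        exact (ih this).cons p

/-- argmax w.r.t. `Prod.fst` only depends on the list of first components. -/
lemma argmax_map_fst_congr :
    ∀ (l₁ l₂ : List (ℝ × ℕ)), l₁.map Prod.fst = l₂.map Prod.fst →
      (l₁.argmax Prod.fst).map Prod.fst = (l₂.argmax Prod.fst).map Prod.fst := by
  intro l₁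
  induction l₁ with
  | nil =>
      intro l₂ h
      have : l₂ = [] := by
        cases l₂ with
        | nil => rfl
        | cons q l => simp at h
      subst this; rfl
  | cons p l ih =>
      intro l₂ h
      cases l₂ with
      | nil => simp at h
      | cons q l₂' =>
          simp only [List.map_cons, List.cons.injEq] at h
          obtain ⟨h1, h2⟩ := h
          have := ih l₂' h2
          rw [List.argmax_cons, List.argmax_cons]
          cases hc : l.argmax Prod.fst with
          | none =>
              rw [hc] at this
              cases hc2 : l₂'.argmax Prod.fst with
              | none => simp [h1]
              | some c => rw [hc2] at this; simp at this
          | some c =>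
              rw [hc] at this
              cases hc2 : l₂'.argmax Prod.fst with
              | none => rw [hc2] at this; simp at this
              | some c2 =>
                  rw [hc2] at this
                  simp only [Option.map_some] at this
                  rw [Option.some.injEq] at this
                  show Option.map Prod.fst (if p.1 < c.1 then some c else some p) =
                    Option.map Prod.fst (if q.1 < c2.1 then some c2 else some q)
                  by_cases hlt : q.1 < c2.1
                  · rw [if_pos hlt, if_pos (by rw [h1, this]; exact hlt)]
                    simp [this]
                  · rw [if_neg hlt, if_neg (by rw [h1, this]; exact hlt)]
                    simp [h1]

lemma step_counter (s : List (ℝ × ℕ)) (c : ℕ) (it : ℝ × ℕ) :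
    step (s, c) it = ((step (s, 0) it).1, c + (step (s, 0) it).2) := by
  cases hc : (fil s it.1).argmax Prod.fst with
  | none => rw [step_none hc, step_none hc]
  | some q => rw [step_some hc, step_some hc]; rfl

lemma foldl_counter :
    ∀ (S : List (ℝ × ℕ)) (s : List (ℝ × ℕ)) (c : ℕ),
      List.foldl step (s, c) S =
        ((List.foldl step (s, 0) S).1, c + (List.foldl step (s, 0) S).2) := by
  intro S
  induction S with
  | nil => intro s c; simp
  | cons it S ih =>
      intro s c
      simp only [List.foldl_cons]
      rw [step_counter s c it, ih _ (c + (step (s, 0) it).2),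
        step_counter s 0 it, ih _ (0 + (step (s, 0) it).2)]
      simp [Nat.add_assoc]


/-- Key one-step coupling lemma. -/
lemma pair_step {s t : List (ℝ × ℕ)} {w : ℝ} (it : ℝ × ℕ)
    (hc : Couple s t w) (hnd : (labs s).Nodup) :
    ((step (s, 0) it).2 = (step (t, 0) it).2 ∧
      (Couple (step (s, 0) it).1 (step (t, 0) it).1 w ∨
        (w < it.1 ∧ ∃ q, (fil s it.1).argmax Prod.fst = some q ∧ q.1 < w ∧
          Couple (step (s, 0) it).1 (step (t, 0) it).1 q.1))) ∨
    (fil s it.1 = [] ∧ w < it.1 ∧ (step (s, 0) it).1 = (step (t, 0) it).1 ∧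
      (step (s, 0) it).2 = 1 ∧ (step (t, 0) it).2 = 0) := by
  obtain ⟨l, k, r, hs, ht⟩ := hc
  obtain ⟨u, ν⟩ := it
  have hwl : w ∉ labs l ∧ w ∉ labs r := by
    rw [hs] at hnd
    simp only [labs, List.map_append, List.map_cons] at hnd
    have h' := List.nodup_middle.mp hnd
    have hw := (List.nodup_cons.mp h').1
    rw [List.mem_append] at hw
    push_neg at hw
    exact hw
  by_cases hwu : w < u
  · by_cases hk : 0 < k
    · -- w alive below u in both states
      have hfs : fil s u = fil l u ++ (w, k) :: fil r u := by
        rw [hs, fil_append, fil_cons_pos _ hk hwu]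
      have hft : fil t u = fil l u ++ (w, k + 1) :: fil r u := by
        rw [ht, fil_append, fil_cons_pos _ (Nat.succ_pos k) hwu]
      have hmap : (fil s u).map Prod.fst = (fil t u).map Prod.fst := by
        rw [hfs, hft]; simp
      have hargeq := argmax_map_fst_congr _ _ hmap
      cases hq : (fil s u).argmax Prod.fst with
      | none =>
          exfalso
          have : fil s u = [] := List.argmax_eq_none.mp hq
          rw [hfs] at this; simp at this
      | some q =>
          rw [hq] at hargeq
          cases hq2 : (fil t u).argmax Prod.fst with
          | none => rw [hq2] at hargeq; simp at hargeq
          | some q2 =>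
              rw [hq2] at hargeq
              simp only [Option.map_some] at hargeq
              rw [Option.some.injEq] at hargeq
              rw [step_some hq, step_some hq2]
              refine Or.inl ⟨rfl, ?_⟩
              by_cases hqw : q.1 = w
              · -- both decrement at w
                left
                rw [← hargeq, hqw]
                obtain ⟨k', rfl⟩ : ∃ k', k = k' + 1 := ⟨k - 1, (Nat.succ_pred_eq_of_pos hk).symm⟩
                rw [hs, ht, decrementAt_append_not_mem _ hwl.1,
                  decrementAt_append_not_mem _ hwl.1,
                  decrementAt_cons_pos, decrementAt_cons_pos]
                exact Couple.cons ⟨l, k', r, rfl, rfl⟩ _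
              · left
                rw [← hargeq]
                exact Couple.cons (Couple.dec_ne ⟨l, k, r, hs, ht⟩ hqw) _
    · -- k = 0 : w dead in s, alive in t
      have hk0 : k = 0 := Nat.eq_zero_of_not_pos hk
      subst hk0
      rw [zero_add] at ht
      have hfs : fil s u = fil l u ++ fil r u := by
        rw [hs, fil_append, fil_cons_neg _ (by simp)]
      have hft : fil t u = fil l u ++ (w, 1) :: fil r u := by
        rw [ht, fil_append, fil_cons_pos _ one_pos hwu]
      cases hq : (fil s u).argmax Prod.fst with
      | none =>
          -- s creates a root; t uses the extra life at w : merge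
          have hnil : fil s u = [] := List.argmax_eq_none.mp hq
          have hl0 : fil l u = [] := by
            rw [hfs] at hnil; exact List.append_eq_nil_iff.mp hnil |>.1
          have hr0 : fil r u = [] := by
            rw [hfs] at hnil; exact List.append_eq_nil_iff.mp hnil |>.2
          have hft1 : fil t u = [(w, 1)] := by rw [hft, hl0, hr0]; simp
          have hq2 : (fil t u).argmax Prod.fst = some (w, 1) := by
            rw [hft1]; exact List.argmax_singleton
          rw [step_none hq, step_some hq2]
          have hdect : decrementAt t w = s := by
            rw [ht, decrementAt_append_not_mem _ hwl.1]
            show l ++ decrementAt ((w, 0 + 1) :: r) w = s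
            rw [decrementAt_cons_pos, hs]
          exact Or.inr ⟨hnil, hwu, by rw [hdect], rfl, rfl⟩
      | some q =>
          -- s decrements at q.1
          have hqmem := List.argmax_mem hq
          have hqs : q ∈ s ∧ 0 < q.2 ∧ q.1 < u := mem_fil.mp hqmem
          have hqlr : q ∈ fil l u ∨ q ∈ fil r u := by
            rw [hfs] at hqmem; exact List.mem_append.mp hqmem
          have hqw : q.1 ≠ w := by
            intro hqe
            rcases hqlr with h' | h'
            · exact hwl.1 (hqe ▸ List.mem_map_of_mem (f := Prod.fst) (mem_fil.mp h').1)
            · exact hwl.2 (hqe ▸ List.mem_map_of_mem (f := Prod.fst) (mem_fil.mp h').1)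
          have hqft : q ∈ fil t u := by
            rw [hft]
            rcases hqlr with h' | h'
            · exact List.mem_append.mpr (Or.inl h')
            · exact List.mem_append.mpr (Or.inr (List.mem_cons_of_mem _ h'))
          have hwft : (w, 1) ∈ fil t u := by rw [hft]; simp
          cases hq2 : (fil t u).argmax Prod.fst with
          | none =>
              exfalso
              have : fil t u = [] := List.argmax_eq_none.mp hq2
              rw [this] at hwft; simp at hwft
          | some q2 =>
              have hq2w : w ≤ q2.1 := List.le_of_mem_argmax hwft hq2
              have hq2q : q.1 ≤ q2.1 := List.le_of_mem_argmax hqft hq2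
              have hq2mem := List.argmax_mem hq2
              rw [step_some hq, step_some hq2]
              refine Or.inl ⟨rfl, ?_⟩
              by_cases hqgt : w < q.1
              · -- max of s is above w; same decrement in both
                left
                have hq2s : q2 ∈ fil s u := by
                  rw [hft] at hq2mem
                  rcases List.mem_append.mp hq2mem with h' | h'
                  · rw [hfs]; exact List.mem_append.mpr (Or.inl h')
                  · rcases List.mem_cons.mp h' with h'' | h''
                    · exfalso; rw [h''] at hq2w hq2q
                      exact absurd (lt_of_lt_of_le hqgt hq2q) (lt_irrefl _)
                    · rw [hfs]; exact List.mem_append.mpr (Or.inr h'')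
                have : q2.1 ≤ q.1 := List.le_of_mem_argmax hq2s hq
                have heq : q2.1 = q.1 := le_antisymm this hq2q
                rw [heq]
                exact Couple.cons (Couple.dec_ne ⟨l, 0, r, hs, ht⟩ hqw) _
              · -- the extra life at w is used by t; the couple moves down to q.1
                have hqlt : q.1 < w := lt_of_le_of_ne (not_lt.mp hqgt) hqw
                have hq2e : q2 = (w, 1) := by
                  rw [hft] at hq2mem
                  rcases List.mem_append.mp hq2mem with h' | h'
                  · exfalso
                    have : q2 ∈ fil s u := by rw [hfs]; exact List.mem_append.mpr (Or.inl h')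
                    have := List.le_of_mem_argmax this hq
                    exact absurd (lt_of_le_of_lt (le_trans hq2w this) hqlt) (lt_irrefl _)
                  · rcases List.mem_cons.mp h' with h'' | h''
                    · exact h''
                    · exfalso
                      have : q2 ∈ fil s u := by
                        rw [hfs]; exact List.mem_append.mpr (Or.inr h'')
                      have := List.le_of_mem_argmax this hq
                      exact absurd (lt_of_le_of_lt (le_trans hq2w this) hqlt) (lt_irrefl _)
                have hdect : decrementAt t q2.1 = s := by
                  rw [hq2e]
                  show decrementAt t w = s
                  rw [ht, decrementAt_append_not_mem _ hwl.1]
                  show l ++ decrementAt ((w, 0 + 1) :: r) w = s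
                  rw [decrementAt_cons_pos, hs]
                right
                refine ⟨hwu, q, rfl, hqlt, ?_⟩
                rw [hdect]
                exact (couple_dec_self ⟨q, hqs.1, rfl, hqs.2.1⟩).cons _
  · -- w ≥ u : the two states filter identically
    have hfeq : fil s u = fil t u := by
      rw [hs, ht, fil_append, fil_append, fil_cons_neg _ (fun h => hwu h.2),
        fil_cons_neg _ (fun h => hwu h.2)]
    cases hq : (fil s u).argmax Prod.fst with
    | none =>
        rw [step_none hq, step_none (hfeq ▸ hq)]
        exact Or.inl ⟨rfl, Or.inl (Couple.cons ⟨l, k, r, hs, ht⟩ _)⟩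
    | some q =>
        have hqw : q.1 ≠ w := by
          have := mem_fil.mp (List.argmax_mem hq)
          intro h; rw [h] at this; exact hwu this.2.2
        rw [step_some hq, step_some (hfeq ▸ hq)]
        exact Or.inl ⟨rfl, Or.inl (Couple.cons (Couple.dec_ne ⟨l, k, r, hs, ht⟩ hqw) _)⟩


lemma Couple.mem_s {s t : List (ℝ × ℕ)} {w : ℝ} (h : Couple s t w) :
    ∃ k, (w, k) ∈ s ∧ (w, k + 1) ∈ t := by
  obtain ⟨l, k, r, hs, ht⟩ := h; exact ⟨k, by simp [hs], by simp [ht]⟩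

lemma labs_step (s : List (ℝ × ℕ)) (it : ℝ × ℕ) :
    labs (step (s, 0) it).1 = it.1 :: labs s := by
  cases hq : (fil s it.1).argmax Prod.fst with
  | none => rw [step_none hq]; rfl
  | some q => rw [step_some hq]; show it.1 :: labs (decrementAt s q.1) = _
              rw [labs_decrementAt]

lemma fresh_step {s : List (ℝ × ℕ)} {it : ℝ × ℕ} {S : List (ℝ × ℕ)}
    (h : (labs s ++ (it :: S).map Prod.fst).Nodup) :
    (labs (step (s, 0) it).1 ++ S.map Prod.fst).Nodup := by
  rw [labs_step, List.cons_append]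
  rw [List.map_cons] at h
  exact (List.perm_middle.nodup_iff).mp h

lemma nodup_of_fresh {s : List (ℝ × ℕ)} {L : List ℝ} (h : (labs s ++ L).Nodup) :
    (labs s).Nodup := h.of_append_left

/-- Coupled runs: either they stay coupled with equal root counts,
or they merge with the lower run having exactly one more root. -/
lemma pair_fold :
    ∀ (S : List (ℝ × ℕ)) (s t : List (ℝ × ℕ)) (w : ℝ),
      Couple s t w → (labs s ++ S.map Prod.fst).Nodup →
      ((List.foldl step (s, 0) S).2 = (List.foldl step (t, 0) S).2 ∧
        ∃ w', Couple (List.foldl step (s, 0) S).1 (List.foldl step (t, 0) S).1 w') ∨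
      ((List.foldl step (s, 0) S).1 = (List.foldl step (t, 0) S).1 ∧
        (List.foldl step (s, 0) S).2 = (List.foldl step (t, 0) S).2 + 1) := by
  intro S
  induction S with
  | nil => intro s t w hc _; exact Or.inl ⟨rfl, w, hc⟩
  | cons it S ih =>
      intro s t w hc hf
      have hnd : (labs s).Nodup := nodup_of_fresh hf
      have hlabs : labs s = labs t := hc.labs_eq
      simp only [List.foldl_cons]
      rw [show step (s, 0) it = ((step (s, 0) it).1, (step (s, 0) it).2) from rfl,
        show step (t, 0) it = ((step (t, 0) it).1, (step (t, 0) it).2) from rfl,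
        foldl_counter S _ (step (s, 0) it).2, foldl_counter S _ (step (t, 0) it).2]
      rcases pair_step it hc hnd with ⟨hr, hcase⟩ | ⟨_, _, hst, hr1, hr0⟩
      · have hw' : ∃ w', Couple (step (s, 0) it).1 (step (t, 0) it).1 w' := by
          rcases hcase with h | ⟨_, q, _, _, h⟩
          · exact ⟨w, h⟩
          · exact ⟨q.1, h⟩
        obtain ⟨w', hcw'⟩ := hw'
        have hf' : (labs (step (s, 0) it).1 ++ S.map Prod.fst).Nodup := fresh_step hf
        rcases ih _ _ _ hcw' hf' with ⟨h1, w'', h2⟩ | ⟨h1, h2⟩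
        · exact Or.inl ⟨by rw [hr, h1], w'', h2⟩
        · exact Or.inr ⟨h1, by rw [hr, h2]; omega⟩
      · rw [hst, hr1, hr0]
        exact Or.inr ⟨rfl, by omega⟩


/-- Triple coupling: runs with `m-1`, `m`, `m+1` lives. Either all three root counts agree,
or the lowest has one more root than the middle one. -/
lemma triple_fold :
    ∀ (S : List (ℝ × ℕ)) (s₁ s₂ s₃ : List (ℝ × ℕ)) (w₁ w₂ : ℝ),
      Couple s₁ s₂ w₁ → Couple s₂ s₃ w₂ → w₁ ≤ w₂ →
      (labs s₂ ++ S.map Prod.fst).Nodup →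
      ((List.foldl step (s₁, 0) S).2 = (List.foldl step (s₂, 0) S).2 ∧
        (List.foldl step (s₂, 0) S).2 = (List.foldl step (s₃, 0) S).2) ∨
      ((List.foldl step (s₁, 0) S).2 = (List.foldl step (s₂, 0) S).2 + 1) := by
  intro S
  induction S with
  | nil => intro _ _ _ _ _ _ _ _ _; exact Or.inl ⟨rfl, rfl⟩
  | cons it S ih =>
      intro s₁ s₂ s₃ w₁ w₂ hc12 hc23 hw hf
      have hnd2 : (labs s₂).Nodup := nodup_of_fresh hf
      have hnd1 : (labs s₁).Nodup := by rw [hc12.labs_eq]; exact hnd2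
      -- w₁ is alive in s₂
      obtain ⟨k₁, _, hw1s2⟩ := hc12.mem_s
      simp only [List.foldl_cons]
      rw [show step (s₁, 0) it = ((step (s₁, 0) it).1, (step (s₁, 0) it).2) from rfl,
        show step (s₂, 0) it = ((step (s₂, 0) it).1, (step (s₂, 0) it).2) from rfl,
        show step (s₃, 0) it = ((step (s₃, 0) it).1, (step (s₃, 0) it).2) from rfl,
        foldl_counter S _ (step (s₁, 0) it).2, foldl_counter S _ (step (s₂, 0) it).2,
        foldl_counter S _ (step (s₃, 0) it).2]
      have hf' : (labs (step (s₂, 0) it).1 ++ S.map Prod.fst).Nodup := fresh_step hf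
      -- the middle/upper pair can never merge
      rcases pair_step it hc23 hnd2 with ⟨hr23, hcase23⟩ | ⟨hnil, hwu, _, _, _⟩
      · rcases pair_step it hc12 hnd1 with ⟨hr12, hcase12⟩ | ⟨_, _, hst, hr1, hr0⟩
        · -- both pairs stay coupled; check the new labels stay ordered
          have h23 : ∃ w₂', Couple (step (s₂, 0) it).1 (step (s₃, 0) it).1 w₂' ∧ w₁ ≤ w₂' := by
            rcases hcase23 with h | ⟨hwu', q, hq, _, h⟩
            · exact ⟨w₂, h, hw⟩
            · refine ⟨q.1, h, ?_⟩
              have : (w₁, k₁ + 1) ∈ fil s₂ it.1 :=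
                mem_fil.mpr ⟨hw1s2, Nat.succ_pos k₁, lt_of_le_of_lt hw hwu'⟩
              exact List.le_of_mem_argmax this hq
          obtain ⟨w₂', hc23', hw12'⟩ := h23
          have h12 : ∃ w₁', Couple (step (s₁, 0) it).1 (step (s₂, 0) it).1 w₁' ∧ w₁' ≤ w₁ := by
            rcases hcase12 with h | ⟨_, q, _, hqlt, h⟩
            · exact ⟨w₁, h, le_refl _⟩
            · exact ⟨q.1, h, le_of_lt hqlt⟩
          obtain ⟨w₁', hc12', hw1'⟩ := h12
          rcases ih _ _ _ _ _ hc12' hc23' (le_trans hw1' hw12') hf' with ⟨h1, h2⟩ | h1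
          · exact Or.inl ⟨by rw [hr12, h1], by rw [hr23, h2]⟩
          · exact Or.inr (by rw [hr12]; omega)
        · -- pair (1,2) merges: from now on runs 1 and 2 are identical
          rw [hst, hr1, hr0]
          exact Or.inr (by omega)
      · -- impossible: w₁ is alive below it.1 in s₂
        exfalso
        have : (w₁, k₁ + 1) ∈ fil s₂ it.1 :=
          mem_fil.mpr ⟨hw1s2, Nat.succ_pos k₁, lt_of_le_of_lt hw hwu⟩
        rw [hnil] at this
        simp at this


lemma labs_step' (s : List (ℝ × ℕ)) (c : ℕ) (it : ℝ × ℕ) :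
    labs (step (s, c) it).1 = it.1 :: labs s := by
  cases hq : (fil s it.1).argmax Prod.fst with
  | none => rw [step_none hq]; rfl
  | some q => rw [step_some hq]; show it.1 :: labs (decrementAt s q.1) = _
              rw [labs_decrementAt]

lemma labs_foldl :
    ∀ (S : List (ℝ × ℕ)) (s : List (ℝ × ℕ)) (c : ℕ),
      labs (List.foldl step (s, c) S).1 = (S.map Prod.fst).reverse ++ labs s := by
  intro S
  induction S with
  | nil => intro s c; simp
  | cons it S ih =>
      intro s c
      simp only [List.foldl_cons]
      rw [show step (s, c) it = ((step (s, c) it).1, (step (s, c) it).2) from rfl, ih,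
        labs_step']
      simp

/-- The key induction step : if one extra life does not help, neither does another. -/
lemma key_step (Base : List (ℝ × ℕ)) (suf : List (ℝ × ℕ)) (u₀ : ℝ) (M : ℕ) (hM : 1 ≤ M)
    (hnd : ((u₀ :: labs Base) ++ suf.map Prod.fst).Nodup)
    (h : (List.foldl step ((u₀, M) :: Base, 0) suf).2 =
      (List.foldl step ((u₀, M - 1) :: Base, 0) suf).2) :
    (List.foldl step ((u₀, M + 1) :: Base, 0) suf).2 =
      (List.foldl step ((u₀, M) :: Base, 0) suf).2 := by
  have hc12 : Couple ((u₀, M - 1) :: Base) ((u₀, M) :: Base) u₀ :=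
    ⟨[], M - 1, Base, (List.nil_append _).symm, by rw [Nat.sub_add_cancel hM]; exact (List.nil_append _).symm⟩
  have hc23 : Couple ((u₀, M) :: Base) ((u₀, M + 1) :: Base) u₀ :=
    ⟨[], M, Base, (List.nil_append _).symm, (List.nil_append _).symm⟩
  have hnd' : (labs ((u₀, M) :: Base) ++ suf.map Prod.fst).Nodup := hnd
  rcases triple_fold suf _ _ _ _ _ hc12 hc23 (le_refl _) hnd' with ⟨h1, h2⟩ | h1
  · omega
  · omega


/-- Once an extra life for the fixed item no longer reduces the number of heaps,
no further extra lives can reduce it. -/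
theorem R_extra_life_stabilizes
    (n : ℕ) (hn : 1 ≤ n) (u : Fin n → ℝ)
    (hu : ∀ i, u i ∈ Set.Ioo (0 : ℝ) 1) (huinj : Function.Injective u)
    (i₀ : Fin n) (v : Fin n → ℕ) (hv : ∀ i, i ≠ i₀ → 1 ≤ v i)
    (Rm : ℕ → ℕ)
    (hRm : ∀ m : ℕ,
      Rm m = R ((List.finRange n).map fun i => (u i, if i = i₀ then m else v i))) :
    ∀ m : ℕ, 2 ≤ m → Rm m = Rm (m - 1) →
      ∀ m' : ℕ, m ≤ m' → Rm m' = Rm (m' - 1) := by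
  classical
  obtain ⟨A, B, hAB⟩ := List.append_of_mem (List.mem_finRange i₀)
  have hndfin := List.nodup_finRange n
  have hi₀ : i₀ ∉ A ∧ i₀ ∉ B := by
    rw [hAB] at hndfin
    have h' := List.perm_middle.nodup_iff.mp hndfin
    have := (List.nodup_cons.mp h').1
    rw [List.mem_append] at this
    push_neg at this
    exact this
  set pre : List (ℝ × ℕ) := A.map fun i => (u i, v i) with hpre
  set suf : List (ℝ × ℕ) := B.map fun i => (u i, v i) with hsuf
  have hitems : ∀ m : ℕ,
      ((List.finRange n).map fun i => (u i, if i = i₀ then m else v i)) =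
        pre ++ (u i₀, m) :: suf := by
    intro m
    rw [hAB, List.map_append, List.map_cons]
    congr 1
    · refine List.map_congr_left fun i hi => ?_
      have : i ≠ i₀ := fun h => hi₀.1 (h ▸ hi)
      simp [this]
    · rw [if_pos rfl]
      congr 1
      refine List.map_congr_left fun i hi => ?_
      have : i ≠ i₀ := fun h => hi₀.2 (h ▸ hi)
      simp [this]
  set P := List.foldl step ([], 0) pre with hP
  obtain ⟨Base, cstar, hstep, hlabsBase⟩ :
      ∃ Base cstar, (∀ m : ℕ, step P ((u i₀ : ℝ), m) = ((u i₀, m) :: Base, cstar)) ∧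
        labs Base = labs P.1 := by
    cases hq : (fil P.1 (u i₀)).argmax Prod.fst with
    | none => exact ⟨P.1, P.2 + 1, fun m => step_none (s := P.1) (c := P.2) hq, rfl⟩
    | some q =>
        exact ⟨decrementAt P.1 q.1, P.2, fun m => step_some (s := P.1) (c := P.2) hq,
          labs_decrementAt _ _⟩
  have hrun : ∀ m : ℕ, Rm m = cstar + (List.foldl step ((u i₀, m) :: Base, 0) suf).2 := by
    intro m
    rw [hRm m, hitems m]
    show (List.foldl step ([], 0) (pre ++ (u i₀, m) :: suf)).2 = _
    rw [List.foldl_append, ← hP, List.foldl_cons, hstep m, foldl_counter]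
  have hndkey : ((u i₀ :: labs Base) ++ suf.map Prod.fst).Nodup := by
    have h0 : (List.map u (List.finRange n)).Nodup := (List.nodup_finRange n).map huinj
    rw [hAB, List.map_append, List.map_cons] at h0
    have h1 := List.perm_middle.nodup_iff.mp h0
    have hperm : (u i₀ :: ((A.map u).reverse ++ B.map u)).Perm
        (u i₀ :: (A.map u ++ B.map u)) :=
      List.Perm.cons _ (((A.map u).reverse_perm).append_right _)
    have h2 : (u i₀ :: ((A.map u).reverse ++ B.map u)).Nodup := hperm.nodup_iff.mpr h1
    have hlB : labs Base = (A.map u).reverse := by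
      rw [hlabsBase, hP, labs_foldl]
      show (pre.map Prod.fst).reverse ++ labs [] = _
      simp [hpre, labs, List.map_map, Function.comp]
    have hsB : suf.map Prod.fst = B.map u := by
      simp [hsuf, List.map_map, Function.comp]
    rw [List.cons_append, hlB, hsB]
    exact h2
  have key : ∀ M : ℕ, 1 ≤ M → Rm M = Rm (M - 1) → Rm (M + 1) = Rm M := by
    intro M hM h
    rw [hrun M, hrun (M - 1)] at h
    rw [hrun (M + 1), hrun M]
    have := key_step Base suf (u i₀) M hM hndkey (by omega)
    omega
  intro m hm2 hstab m' hm'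
  induction m', hm' using Nat.le_induction with
  | base => exact hstab
  | succ m' hmm ih =>
      have h1 : 1 ≤ m' := by omega
      have := key m' h1 ih
      simpa using this


end HeapPatience
end

section
/- Let μ and μ' be probability distributions on {1,2,…} with the same finite mean, and assume μ' is supported on {ℓ, ℓ+1} for some ℓ ≥ 1. Let ν have law μ and ν' have law μ', and write R_ν (resp. R_{ν'}) for the (random) number of heaps when item i₀ is given ν (resp. ν') lives while every other item i keeps its fixed v_i lives. Then E[R_{ν'}] ≤ E[R_ν]. -/
open MeasureTheory ProbabilityTheory Filter Topology
open scoped ENNReal NNReal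

namespace HeapPatience

/-! ### Auxiliary: bump -/

noncomputable def bump : List (ℝ × ℕ) → ℝ → List (ℝ × ℕ)
  | [], _ => []
  | p :: rest, q => if p.1 = q then (p.1, p.2 + 1) :: rest else p :: bump rest q

def AliveLt (s : List (ℝ × ℕ)) (x c : ℝ) : Prop :=
  ∃ p ∈ s, p.1 = c ∧ 0 < p.2 ∧ p.1 < x

lemma map_fst_decrementAt (s : List (ℝ × ℕ)) (c : ℝ) :
    (decrementAt s c).map Prod.fst = s.map Prod.fst := by
  induction s with
  | nil => rfl
  | cons a rest ih => by_cases h : a.1 = c ∧ 0 < a.2 <;> simp [decrementAt, h, ih]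

lemma map_fst_bump (s : List (ℝ × ℕ)) (q : ℝ) :
    (bump s q).map Prod.fst = s.map Prod.fst := by
  induction s with
  | nil => rfl
  | cons a rest ih => by_cases h : a.1 = q <;> simp [bump, h, ih]

lemma mem_decrementAt_of_ne {p : ℝ × ℕ} {s : List (ℝ × ℕ)} {c : ℝ}
    (hp : p ∈ s) (h : p.1 ≠ c) : p ∈ decrementAt s c := by
  induction s with
  | nil => simp at hp
  | cons a rest ih =>
    rcases List.mem_cons.1 hp with rfl | hp'
    · have : ¬ (p.1 = c ∧ 0 < p.2) := fun hc => h hc.1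
      simp [decrementAt, this]
    · by_cases hc : a.1 = c ∧ 0 < a.2 <;> simp [decrementAt, hc, ih hp', Or.inr hp']

lemma mem_bump_of_ne {p : ℝ × ℕ} {s : List (ℝ × ℕ)} {q : ℝ}
    (hp : p ∈ s) (h : p.1 ≠ q) : p ∈ bump s q := by
  induction s with
  | nil => simp at hp
  | cons a rest ih =>
    rcases List.mem_cons.1 hp with rfl | hp'
    · simp [bump, h]
    · by_cases hc : a.1 = q <;> simp [bump, hc, ih hp', Or.inr hp']

lemma mem_of_mem_bump_of_ne {p : ℝ × ℕ} {s : List (ℝ × ℕ)} {q : ℝ}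
    (hp : p ∈ bump s q) (h : p.1 ≠ q) : p ∈ s := by
  induction s with
  | nil => simp [bump] at hp
  | cons a rest ih =>
    by_cases hc : a.1 = q
    · rw [bump, if_pos hc] at hp
      rcases List.mem_cons.1 hp with rfl | hp'
      · exact absurd hc h
      · exact List.mem_cons_of_mem _ hp'
    · rw [bump, if_neg hc] at hp
      rcases List.mem_cons.1 hp with rfl | hp'
      · exact List.mem_cons_self
      · exact List.mem_cons_of_mem _ (ih hp')

lemma nodup_tail {a : ℝ × ℕ} {rest : List (ℝ × ℕ)}
    (hnd : ((a :: rest).map Prod.fst).Nodup) : (rest.map Prod.fst).Nodup :=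
  (List.nodup_cons.1 (by simpa using hnd)).2

lemma head_fst_not_mem {a : ℝ × ℕ} {rest : List (ℝ × ℕ)}
    (hnd : ((a :: rest).map Prod.fst).Nodup) : a.1 ∉ rest.map Prod.fst :=
  (List.nodup_cons.1 (by simpa using hnd)).1

lemma mem_decrementAt_self {s : List (ℝ × ℕ)} {c : ℝ} {l : ℕ}
    (hnd : (s.map Prod.fst).Nodup) (h : (c, l) ∈ s) (hl : 0 < l) :
    (c, l - 1) ∈ decrementAt s c := by
  induction s with
  | nil => simp at h
  | cons a rest ih =>
    rcases List.mem_cons.1 h with he | h'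
    · have hc : a.1 = c ∧ 0 < a.2 := by rw [← he]; exact ⟨rfl, hl⟩
      rw [decrementAt, if_pos hc, ← he]
      exact List.mem_cons_self
    · have hane : ¬ (a.1 = c ∧ 0 < a.2) := by
        rintro ⟨hac, -⟩
        exact head_fst_not_mem hnd (hac ▸ List.mem_map_of_mem (f := Prod.fst) h')
      rw [decrementAt, if_neg hane]
      exact List.mem_cons_of_mem _ (ih (nodup_tail hnd) h')

lemma mem_bump_self {s : List (ℝ × ℕ)} {q : ℝ} {l : ℕ}
    (hnd : (s.map Prod.fst).Nodup) (h : (q, l) ∈ s) :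
    (q, l + 1) ∈ bump s q := by
  induction s with
  | nil => simp at h
  | cons a rest ih =>
    rcases List.mem_cons.1 h with he | h'
    · rw [bump, if_pos (by rw [← he])]
      rw [← he]
      exact List.mem_cons_self
    · have hane : a.1 ≠ q := by
        intro hac
        exact head_fst_not_mem hnd (hac ▸ List.mem_map_of_mem (f := Prod.fst) h')
      rw [bump, if_neg hane]
      exact List.mem_cons_of_mem _ (ih (nodup_tail hnd) h')

lemma snd_eq_of_mem {s : List (ℝ × ℕ)} {q : ℝ} {l l' : ℕ}
    (hnd : (s.map Prod.fst).Nodup) (h : (q, l) ∈ s) (h' : (q, l') ∈ s) : l = l' :=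
  congrArg Prod.snd (List.inj_on_of_nodup_map hnd h h' rfl)

lemma decrementAt_bump_cancel (s : List (ℝ × ℕ)) (q : ℝ) :
    decrementAt (bump s q) q = s := by
  induction s with
  | nil => rfl
  | cons a rest ih =>
    by_cases h : a.1 = q
    · rw [bump, if_pos h, decrementAt, if_pos ⟨h, Nat.succ_pos _⟩]
      simp
    · rw [bump, if_neg h, decrementAt, if_neg (fun hc => h hc.1), ih]

lemma bump_decrementAt_cancel {s : List (ℝ × ℕ)} {c : ℝ} {l : ℕ}
    (hnd : (s.map Prod.fst).Nodup) (h : (c, l) ∈ s) (hl : 0 < l) :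
    bump (decrementAt s c) c = s := by
  induction s with
  | nil => simp at h
  | cons a rest ih =>
    by_cases hc : a.1 = c ∧ 0 < a.2
    · rw [decrementAt, if_pos hc, bump, if_pos hc.1]
      have : a.2 - 1 + 1 = a.2 := Nat.succ_pred_eq_of_pos hc.2
      simp [this]
    · have hane : a.1 ≠ c := by
        intro hac
        rcases List.mem_cons.1 h with he | h'
        · exact hc ⟨hac, by rw [← he]; exact hl⟩
        · exact head_fst_not_mem hnd (hac ▸ List.mem_map_of_mem (f := Prod.fst) h')
      have h' : (c, l) ∈ rest := by
        rcases List.mem_cons.1 h with he | h'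
        · exact absurd (by rw [← he] : a.1 = c) hane
        · exact h'
      rw [decrementAt, if_neg hc, bump, if_neg hane, ih (nodup_tail hnd) h']

lemma decrementAt_bump_comm {c q : ℝ} (h : c ≠ q) (s : List (ℝ × ℕ)) :
    decrementAt (bump s q) c = bump (decrementAt s c) q := by
  induction s with
  | nil => rfl
  | cons a rest ih =>
    by_cases haq : a.1 = q
    · have hac : ¬ (a.1 = c ∧ 0 < a.2) := fun hc => h (hc.1.symm.trans haq)
      have hac2 : ¬ (a.1 = c ∧ 0 < a.2 + 1) := fun hc => h (hc.1.symm.trans haq)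
      rw [bump, if_pos haq, decrementAt, if_neg hac2, decrementAt, if_neg hac,
        bump, if_pos haq]
    · by_cases hac : a.1 = c ∧ 0 < a.2
      · rw [bump, if_neg haq, decrementAt, if_pos hac, decrementAt, if_pos hac,
          bump, if_neg haq]
      · rw [bump, if_neg haq, decrementAt, if_neg hac, decrementAt, if_neg hac,
          bump, if_neg haq, ih]

lemma bump_cons_ne {x : ℝ × ℕ} {q : ℝ} (h : x.1 ≠ q) (s : List (ℝ × ℕ)) :
    bump (x :: s) q = x :: bump s q := by
  rw [bump, if_neg h]

/-! ### step specification -/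

lemma step_spec (s : List (ℝ × ℕ)) (r : ℕ) (x : ℝ × ℕ) :
    ((∀ c, ¬ AliveLt s x.1 c) ∧ step (s, r) x = (x :: s, r + 1))
    ∨ ∃ c, AliveLt s x.1 c ∧ (∀ c', AliveLt s x.1 c' → c' ≤ c) ∧
        step (s, r) x = (x :: decrementAt s c, r) := by
  rcases h : (s.filter fun p => decide (0 < p.2 ∧ p.1 < x.1)).argmax Prod.fst with _ | m
  · left
    refine ⟨?_, ?_⟩
    · rintro c ⟨p, hp, rfl, hpos, hlt⟩
      have hpf : p ∈ s.filter fun p => decide (0 < p.2 ∧ p.1 < x.1) :=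
        List.mem_filter.2 ⟨hp, by simp [hpos, hlt]⟩
      rw [List.argmax_eq_none] at h
      rw [h] at hpf
      exact absurd hpf List.not_mem_nil
    · simp only [step]
      rw [h]
  · right
    have hm : m ∈ s.filter fun p => decide (0 < p.2 ∧ p.1 < x.1) := List.argmax_mem h
    have hm1 := List.mem_filter.1 hm
    have hm2 : 0 < m.2 ∧ m.1 < x.1 := by simpa using hm1.2
    refine ⟨m.1, ⟨m, hm1.1, rfl, hm2.1, hm2.2⟩, ?_, ?_⟩
    · rintro c' ⟨p, hp, rfl, hpos, hlt⟩
      exact List.le_of_mem_argmax (List.mem_filter.2 ⟨hp, by simp [hpos, hlt]⟩) h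
    · simp only [step]
      rw [h]

lemma step_eq_root {s : List (ℝ × ℕ)} {r : ℕ} {x : ℝ × ℕ}
    (h : ∀ c, ¬ AliveLt s x.1 c) : step (s, r) x = (x :: s, r + 1) := by
  rcases step_spec s r x with ⟨-, heq⟩ | ⟨c, hc, -, -⟩
  · exact heq
  · exact absurd hc (h c)

lemma step_eq_attach {s : List (ℝ × ℕ)} {r : ℕ} {x : ℝ × ℕ} {c : ℝ}
    (h1 : AliveLt s x.1 c) (h2 : ∀ c', AliveLt s x.1 c' → c' ≤ c) :
    step (s, r) x = (x :: decrementAt s c, r) := by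
  rcases step_spec s r x with ⟨hn, -⟩ | ⟨c', hc', hmax', heq⟩
  · exact absurd h1 (hn c)
  · have : c' = c := le_antisymm (h2 c' hc') (hmax' c h1)
    rw [← this]
    exact heq

lemma map_fst_step (s : List (ℝ × ℕ)) (r : ℕ) (x : ℝ × ℕ) :
    ((step (s, r) x).1).map Prod.fst = x.1 :: s.map Prod.fst := by
  rcases step_spec s r x with ⟨-, h⟩ | ⟨c, -, -, h⟩ <;>
    rw [h] <;> simp [map_fst_decrementAt]

lemma aliveLt_bump_iff {s : List (ℝ × ℕ)} {q : ℝ} {lq : ℕ}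
    (hnd : (s.map Prod.fst).Nodup) (hq : (q, lq) ∈ s) (x c : ℝ) :
    AliveLt (bump s q) x c ↔ AliveLt s x c ∨ (c = q ∧ q < x) := by
  constructor
  · rintro ⟨p, hp, rfl, hpos, hlt⟩
    by_cases hpq : p.1 = q
    · exact Or.inr ⟨hpq, hpq ▸ hlt⟩
    · exact Or.inl ⟨p, mem_of_mem_bump_of_ne hp hpq, rfl, hpos, hlt⟩
  · rintro (⟨p, hp, rfl, hpos, hlt⟩ | ⟨hcq2, hlt⟩)
    · by_cases hpq : p.1 = q
      · have hp2 : p = (q, lq) := List.inj_on_of_nodup_map hnd hp hq hpq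
        refine ⟨(q, lq + 1), mem_bump_self hnd hq, ?_, Nat.succ_pos _, ?_⟩
        · rw [hp2]
        · rw [← hpq]; exact hlt
      · exact ⟨p, mem_bump_of_ne hp hpq, rfl, hpos, hlt⟩
    · exact ⟨(q, lq + 1), mem_bump_self hnd hq, hcq2.symm, Nat.succ_pos _, hlt⟩

/-! ### One-step coupling -/

lemma oneStep {s : List (ℝ × ℕ)} (r : ℕ) (x : ℝ × ℕ) {q : ℝ} {lq : ℕ}
    (hnd : (s.map Prod.fst).Nodup) (hq : (q, lq) ∈ s) (hx : x.1 ∉ s.map Prod.fst) :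
    (∃ q' lq', (q', lq') ∈ (step (s, r) x).1 ∧
      (q' = q ∨ (q' < q ∧ lq = 0 ∧ q < x.1 ∧ AliveLt s x.1 q' ∧
        ∀ c, AliveLt s x.1 c → c ≤ q')) ∧
      step (bump s q, r) x = (bump (step (s, r) x).1 q', (step (s, r) x).2))
    ∨ (lq = 0 ∧ q < x.1 ∧ step (s, r) x = (x :: s, r + 1) ∧
        step (bump s q, r) x = (x :: s, r)) := by
  have hxq : x.1 ≠ q := fun h => hx (h ▸ List.mem_map_of_mem (f := Prod.fst) hq)
  rcases step_spec s r x with ⟨hnone, hs_eq⟩ | ⟨c, hc, hmax, hs_eq⟩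
  · by_cases hlt : q < x.1
    · -- resolution
      have hlq : lq = 0 := by
        by_contra hlq
        exact hnone q ⟨(q, lq), hq, rfl, Nat.pos_of_ne_zero hlq, hlt⟩
      have hb : step (bump s q, r) x = (x :: decrementAt (bump s q) q, r) := by
        refine step_eq_attach ?_ ?_
        · exact (aliveLt_bump_iff hnd hq x.1 q).2 (Or.inr ⟨rfl, hlt⟩)
        · intro c' hc'
          rcases (aliveLt_bump_iff hnd hq x.1 c').1 hc' with h | ⟨hceq, -⟩
          · exact absurd h (hnone c')
          · exact le_of_eq hceq
      rw [decrementAt_bump_cancel] at hb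
      exact Or.inr ⟨hlq, hlt, hs_eq, hb⟩
    · -- both root
      left
      refine ⟨q, lq, ?_, Or.inl rfl, ?_⟩
      · rw [hs_eq]; exact List.mem_cons_of_mem _ hq
      have hb : step (bump s q, r) x = (x :: bump s q, r + 1) := by
        refine step_eq_root ?_
        intro c' hc'
        rcases (aliveLt_bump_iff hnd hq x.1 c').1 hc' with h | ⟨rfl, h⟩
        · exact hnone c' h
        · exact hlt h
      rw [hb, hs_eq]
      rw [bump_cons_ne hxq]
  · -- s attaches at c
    by_cases hmove : c < q ∧ q < x.1 ∧ lq = 0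
    · -- bump attaches at q instead : difference moves to c
      obtain ⟨hcq, hqx, hlq⟩ := hmove
      obtain ⟨p, hp, hp1, hppos, hplt⟩ := hc
      have hpc : p = (c, p.2) := by rw [← hp1]
      have hcmem : (c, p.2) ∈ s := hpc ▸ hp
      have hb : step (bump s q, r) x = (x :: decrementAt (bump s q) q, r) := by
        refine step_eq_attach ?_ ?_
        · exact (aliveLt_bump_iff hnd hq x.1 q).2 (Or.inr ⟨rfl, hqx⟩)
        · intro c' hc'
          rcases (aliveLt_bump_iff hnd hq x.1 c').1 hc' with h | ⟨hceq, -⟩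
          · exact le_of_lt (lt_of_le_of_lt (hmax c' h) hcq)
          · exact le_of_eq hceq
      rw [decrementAt_bump_cancel] at hb
      left
      refine ⟨c, p.2 - 1, ?_, Or.inr ⟨hcq, hlq, hqx, ⟨p, hp, hp1, hppos, hplt⟩, hmax⟩, ?_⟩
      · rw [hs_eq]
        exact List.mem_cons_of_mem _ (mem_decrementAt_self hnd hcmem hppos)
      · have hxc : x.1 ≠ c := by rw [← hp1]; exact ne_of_gt hplt
        rw [hb, hs_eq, bump_cons_ne hxc, bump_decrementAt_cancel hnd hcmem hppos]
    · -- same choice c in both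
      have hble : ∀ c', AliveLt (bump s q) x.1 c' → c' ≤ c := by
        intro c' hc'
        rcases (aliveLt_bump_iff hnd hq x.1 c').1 hc' with h | ⟨hceq, hqx⟩
        · exact hmax c' h
        · -- c' = q : show q ≤ c
          rw [hceq]
          by_contra hqc
          push_neg at hqc
          refine hmove ⟨hqc, hqx, ?_⟩
          by_contra hlq
          exact hqc.not_ge (hmax q ⟨(q, lq), hq, rfl, Nat.pos_of_ne_zero hlq, hqx⟩)
      have hb : step (bump s q, r) x = (x :: decrementAt (bump s q) c, r) := by
        refine step_eq_attach ?_ hble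
        rcases hc with ⟨p, hp, hp1, hppos, hplt⟩
        by_cases hpq : p.1 = q
        · have hp2 : p = (q, lq) := List.inj_on_of_nodup_map hnd hp hq hpq
          exact ⟨(q, lq + 1), mem_bump_self hnd hq, by show q = c; rw [← hpq]; exact hp1,
            Nat.succ_pos _, by show q < x.1; rw [← hpq]; exact hplt⟩
        · exact ⟨p, mem_bump_of_ne hp hpq, hp1, hppos, hplt⟩
      left
      by_cases hcq : c = q
      · -- chosen particle is q itself; q alive in s
        subst hcq
        obtain ⟨p, hp, hp1, hppos, hplt⟩ := hc
        have hp2 : p = (c, lq) := List.inj_on_of_nodup_map hnd hp hq hp1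
        have hlqpos : 0 < lq := by rw [hp2] at hppos; exact hppos
        have h1 : decrementAt (bump s c) c = s := decrementAt_bump_cancel s c
        have h2 : bump (decrementAt s c) c = s := bump_decrementAt_cancel hnd hq hlqpos
        refine ⟨c, lq - 1, ?_, Or.inl rfl, ?_⟩
        · rw [hs_eq]
          exact List.mem_cons_of_mem _ (mem_decrementAt_self hnd hq hlqpos)
        · rw [hb, h1, hs_eq, bump_cons_ne hxq, h2]
      · refine ⟨q, lq, ?_, Or.inl rfl, ?_⟩
        · rw [hs_eq]
          exact List.mem_cons_of_mem _
            (mem_decrementAt_of_ne hq (fun h => hcq h.symm))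
        · rw [hb, decrementAt_bump_comm hcq, hs_eq, bump_cons_ne hxq]

/-! ### runFrom -/

noncomputable def runFrom (s : List (ℝ × ℕ)) (r : ℕ) (its : List (ℝ × ℕ)) :
    List (ℝ × ℕ) × ℕ :=
  List.foldl step (s, r) its

lemma runFrom_nil (s : List (ℝ × ℕ)) (r : ℕ) : runFrom s r ([] : List (ℝ × ℕ)) = (s, r) := rfl

lemma runFrom_cons (s : List (ℝ × ℕ)) (r : ℕ) (x : ℝ × ℕ) (its : List (ℝ × ℕ)) :
    runFrom s r (x :: its) = runFrom (step (s, r) x).1 (step (s, r) x).2 its := by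
  simp [runFrom]

lemma step_add (s : List (ℝ × ℕ)) (r k : ℕ) (x : ℝ × ℕ) :
    step (s, r + k) x = ((step (s, r) x).1, (step (s, r) x).2 + k) := by
  rcases step_spec s r x with ⟨hn, h⟩ | ⟨c, h1, h2, h⟩
  · rw [h, step_eq_root hn]
    simp [Prod.ext_iff]
    omega
  · rw [h, step_eq_attach h1 h2]

lemma runFrom_add (its : List (ℝ × ℕ)) : ∀ (s : List (ℝ × ℕ)) (r k : ℕ),
    runFrom s (r + k) its = ((runFrom s r its).1, (runFrom s r its).2 + k) := by
  induction its with
  | nil => intro s r k; simp [runFrom_nil]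
  | cons x its ih =>
    intro s r k
    rw [runFrom_cons, step_add, ih, runFrom_cons]

lemma map_fst_runFrom (its : List (ℝ × ℕ)) : ∀ (s : List (ℝ × ℕ)) (r : ℕ),
    ((runFrom s r its).1).map Prod.fst = (its.map Prod.fst).reverse ++ s.map Prod.fst := by
  induction its with
  | nil => intro s r; simp [runFrom_nil]
  | cons x its ih =>
    intro s r
    rw [runFrom_cons, ih, map_fst_step]
    simp

lemma nodup_shift {x : ℝ × ℕ} {its s : List (ℝ × ℕ)}
    (hnd : (((x :: its).map Prod.fst) ++ s.map Prod.fst).Nodup) :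
    ((its.map Prod.fst) ++ ((step (s, 0) x).1).map Prod.fst).Nodup := by
  rw [map_fst_step]
  refine (List.perm_middle.nodup_iff).2 ?_
  simpa using hnd

lemma nodup_head_not_mem {x : ℝ × ℕ} {its s : List (ℝ × ℕ)}
    (hnd : (((x :: its).map Prod.fst) ++ s.map Prod.fst).Nodup) :
    x.1 ∉ s.map Prod.fst := by
  simp only [List.map_cons, List.cons_append, List.nodup_cons] at hnd
  intro h
  exact hnd.1 (List.mem_append_right _ h)

lemma nodup_state {its s : List (ℝ × ℕ)}
    (hnd : ((its.map Prod.fst) ++ s.map Prod.fst).Nodup) :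
    (s.map Prod.fst).Nodup :=
  hnd.of_append_right

/-! ### Pair coupling -/

lemma pair : ∀ (its s : List (ℝ × ℕ)) (r : ℕ) (q : ℝ) (lq : ℕ),
    ((its.map Prod.fst) ++ s.map Prod.fst).Nodup → (q, lq) ∈ s →
    (∃ q' lq', (q', lq') ∈ (runFrom s r its).1 ∧
      runFrom (bump s q) r its = (bump (runFrom s r its).1 q', (runFrom s r its).2))
    ∨ (∃ a', (runFrom s r its).2 = a' + 1 ∧
        runFrom (bump s q) r its = ((runFrom s r its).1, a')) := by
  intro its
  induction its with
  | nil =>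
    intro s r q lq hnd hq
    exact Or.inl ⟨q, lq, hq, rfl⟩
  | cons x its ih =>
    intro s r q lq hnd hq
    have hx : x.1 ∉ s.map Prod.fst := nodup_head_not_mem hnd
    have hnds : (s.map Prod.fst).Nodup := nodup_state hnd
    have hnd' : ((its.map Prod.fst) ++ ((step (s, r) x).1).map Prod.fst).Nodup := by
      rw [map_fst_step]
      refine (List.perm_middle.nodup_iff).2 ?_
      simpa using hnd
    rcases oneStep r x hnds hq hx with ⟨q', lq', hmem, _, heq⟩ | ⟨hlq, hlt, hsq, heq⟩
    · rw [runFrom_cons s r x its, runFrom_cons (bump s q) r x its, heq]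
      exact ih (step (s, r) x).1 (step (s, r) x).2 q' lq' hnd' hmem
    · right
      rw [runFrom_cons s r x its, runFrom_cons (bump s q) r x its, heq, hsq]
      have := runFrom_add its (x :: s) r 1
      refine ⟨(runFrom (x :: s) r its).2, ?_, ?_⟩ <;> simp [this]

/-! ### Trio coupling (convexity) -/

lemma trio : ∀ (its A : List (ℝ × ℕ)) (r : ℕ) (q₁ : ℝ) (l₁ : ℕ) (q₂ : ℝ) (l₂ : ℕ),
    ((its.map Prod.fst) ++ A.map Prod.fst).Nodup → (q₁, l₁) ∈ A →
    (q₂, l₂) ∈ bump A q₁ → q₁ ≤ q₂ →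
    (∃ q₁' l₁' q₂' l₂', q₁' ≤ q₂' ∧ (q₁', l₁') ∈ (runFrom A r its).1 ∧
        (q₂', l₂') ∈ bump (runFrom A r its).1 q₁' ∧
        runFrom (bump A q₁) r its = (bump (runFrom A r its).1 q₁', (runFrom A r its).2) ∧
        runFrom (bump (bump A q₁) q₂) r its
          = (bump (bump (runFrom A r its).1 q₁') q₂', (runFrom A r its).2))
    ∨ (∃ q' l' a', (runFrom A r its).2 = a' + 1 ∧ (q', l') ∈ (runFrom A r its).1 ∧
        runFrom (bump A q₁) r its = ((runFrom A r its).1, a') ∧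
        runFrom (bump (bump A q₁) q₂) r its = (bump (runFrom A r its).1 q', a'))
    ∨ (∃ a'', (runFrom A r its).2 = a'' + 2 ∧
        runFrom (bump A q₁) r its = ((runFrom A r its).1, a'' + 1) ∧
        runFrom (bump (bump A q₁) q₂) r its = ((runFrom A r its).1, a'')) := by
  intro its
  induction its with
  | nil =>
    intro A r q₁ l₁ q₂ l₂ hnd h1 h2 h12
    exact Or.inl ⟨q₁, l₁, q₂, l₂, h12, h1, h2, rfl, rfl⟩
  | cons x its ih =>
    intro A r q₁ l₁ q₂ l₂ hnd h1 h2 h12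
    have hx : x.1 ∉ A.map Prod.fst := nodup_head_not_mem hnd
    have hndA : (A.map Prod.fst).Nodup := nodup_state hnd
    have hndB : ((bump A q₁).map Prod.fst).Nodup := by rw [map_fst_bump]; exact hndA
    have hxB : x.1 ∉ (bump A q₁).map Prod.fst := by rw [map_fst_bump]; exact hx
    have h1B : (q₁, l₁ + 1) ∈ bump A q₁ := mem_bump_self hndA h1
    have hnd' : ((its.map Prod.fst) ++ ((step (A, r) x).1).map Prod.fst).Nodup := by
      rw [map_fst_step]
      refine (List.perm_middle.nodup_iff).2 ?_
      simpa using hnd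
    rcases oneStep r x hndA h1 hx with ⟨q₁', l₁', hm1, hform1, heq1⟩ |
      ⟨hl10, hlt1, hsA, heqB⟩
    · -- AB pending
      rcases oneStep r x hndB h2 hxB with ⟨q₂', l₂', hm2, hform2, heq2⟩ |
        ⟨hl20, hlt2, hsB, heqC⟩
      · -- BC pending too
        have hq12' : q₁' ≤ q₂' := by
          rcases hform2 with rfl | ⟨hlt, hl2z, hq2x, halive, hmax⟩
          · rcases hform1 with rfl | ⟨hlt1', -⟩
            · exact h12
            · exact le_of_lt (lt_of_lt_of_le hlt1' h12)
          · have hq1x : q₁ < x.1 := lt_of_le_of_lt h12 hq2x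
            have hAB : AliveLt (bump A q₁) x.1 q₁ :=
              ⟨(q₁, l₁ + 1), h1B, rfl, Nat.succ_pos _, hq1x⟩
            have hq1le : q₁ ≤ q₂' := hmax q₁ hAB
            rcases hform1 with rfl | ⟨hlt1', -⟩
            · exact hq1le
            · exact le_of_lt (lt_of_lt_of_le hlt1' hq1le)
        have hm2' : (q₂', l₂') ∈ bump (step (A, r) x).1 q₁' := by
          rw [heq1] at hm2
          exact hm2
        rw [runFrom_cons A r x its, runFrom_cons (bump A q₁) r x its,
          runFrom_cons (bump (bump A q₁) q₂) r x its, heq1, heq2, heq1]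
        exact ih (step (A, r) x).1 (step (A, r) x).2 q₁' l₁' q₂' l₂' hnd' hm1 hm2' hq12'
      · -- BC resolves while AB pending : impossible
        exfalso
        rcases step_spec (bump A q₁) r x with ⟨hnone, -⟩ | ⟨c, -, -, hatt⟩
        · exact hnone q₁ ⟨(q₁, l₁ + 1), h1B, rfl, Nat.succ_pos _,
            lt_of_le_of_lt h12 hlt2⟩
        · rw [hatt] at hsB
          have := congrArg Prod.snd hsB
          simp at this
    · -- AB resolves
      rcases oneStep r x hndB h2 hxB with ⟨q₂', l₂', hm2, hform2, heq2⟩ |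
        ⟨hl20, hlt2, hsB, heqC⟩
      · -- BC pending : use pair lemma for the rest
        rw [heqB] at hm2 heq2
        -- hm2 : (q₂', l₂') ∈ x :: A ; heq2 : step (bump (bump A q₁) q₂, r) x = (bump (x :: A) q₂', r)
        have hndxA : ((its.map Prod.fst) ++ ((x :: A).map Prod.fst)).Nodup := by
          refine (List.perm_middle.nodup_iff).2 ?_
          simpa using hnd
        have hm2' : (q₂', l₂') ∈ x :: A := hm2
        simp only [runFrom_cons, hsA, heqB, heq2]
        have hAdd := runFrom_add its (x :: A) r 1
        rcases pair its (x :: A) r q₂' l₂' hndxA hm2' with ⟨q'', l'', hmem, hpe⟩ |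
          ⟨a'', h2e, hpe⟩
        · refine Or.inr (Or.inl ⟨q'', l'', (runFrom (x :: A) r its).2, ?_, ?_, ?_, ?_⟩)
          · rw [hAdd]
          · rw [hAdd]; exact hmem
          · rw [hAdd]
          · rw [hAdd]; exact hpe
        · refine Or.inr (Or.inr ⟨a'', ?_, ?_, ?_⟩)
          · rw [hAdd, h2e]
          · rw [hAdd, ← h2e]
          · rw [hAdd]; exact hpe
      · -- both resolve at once : impossible
        exfalso
        rw [heqB] at hsB
        have := congrArg Prod.snd hsB
        simp at this

/-! ### Convexity of Rm -/

lemma R_eq (items : List (ℝ × ℕ)) : R items = (runFrom [] 0 items).2 := rfl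

lemma runFrom_append (s : List (ℝ × ℕ)) (r : ℕ) (l₁ l₂ : List (ℝ × ℕ)) :
    runFrom s r (l₁ ++ l₂) = runFrom (runFrom s r l₁).1 (runFrom s r l₁).2 l₂ := by
  simp [runFrom, List.foldl_append]

lemma perm_helper (P Q : List ℝ) (a : ℝ) :
    (Q ++ a :: P.reverse).Perm (P ++ a :: Q) := by
  refine List.Perm.trans List.perm_middle ?_
  refine List.Perm.trans (List.Perm.cons a (List.Perm.append_left Q (List.reverse_perm P))) ?_
  refine List.Perm.trans (List.Perm.cons a List.perm_append_comm) ?_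
  exact List.perm_middle.symm

lemma Rm_convex {n : ℕ} (u : Fin n → ℝ) (huinj : Function.Injective u)
    (i₀ : Fin n) (v : Fin n → ℕ) (Rm : ℕ → ℕ)
    (hRm : ∀ m : ℕ,
      Rm m = R ((List.finRange n).map fun i => (u i, if i = i₀ then m else v i))) :
    ∀ m : ℕ, (Rm (m + 1) = Rm m ∧ Rm (m + 2) = Rm m)
      ∨ (Rm m = Rm (m + 1) + 1 ∧ Rm (m + 2) = Rm (m + 1))
      ∨ (Rm m = Rm (m + 1) + 1 ∧ Rm (m + 1) = Rm (m + 2) + 1) := by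
  obtain ⟨pre, post, hsplit⟩ := List.append_of_mem (List.mem_finRange i₀)
  have hndfr : (pre ++ i₀ :: post).Nodup := hsplit ▸ List.nodup_finRange n
  have hi₀pre : i₀ ∉ pre := fun h =>
    (List.disjoint_of_nodup_append hndfr) h (List.mem_cons_self)
  have hi₀post : i₀ ∉ post := (List.nodup_cons.1 hndfr.of_append_right).1
  set w : Fin n → ℝ × ℕ := fun i => (u i, v i) with hw
  have hmap : ∀ m : ℕ,
      ((List.finRange n).map fun i => (u i, if i = i₀ then m else v i))
        = pre.map w ++ (u i₀, m) :: post.map w := by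
    intro m
    rw [hsplit, List.map_append, List.map_cons, if_pos rfl]
    congr 1
    · refine List.map_congr_left fun i hi => ?_
      have : i ≠ i₀ := fun h => hi₀pre (h ▸ hi)
      simp [hw, this]
    · congr 1
      refine List.map_congr_left fun i hi => ?_
      have : i ≠ i₀ := fun h => hi₀post (h ▸ hi)
      simp [hw, this]
  set S₀ : List (ℝ × ℕ) := (runFrom [] 0 (pre.map w)).1 with hS₀
  set r₀ : ℕ := (runFrom [] 0 (pre.map w)).2 with hr₀
  obtain ⟨S₁, r₁, hfst, hstep⟩ : ∃ S₁ r₁, S₁.map Prod.fst = S₀.map Prod.fst ∧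
      ∀ m : ℕ, step (S₀, r₀) (u i₀, m) = ((u i₀, m) :: S₁, r₁) := by
    rcases step_spec S₀ r₀ (u i₀, 0) with ⟨hn, -⟩ | ⟨c, hc, hmax, -⟩
    · exact ⟨S₀, r₀ + 1, rfl, fun m => step_eq_root hn⟩
    · exact ⟨decrementAt S₀ c, r₀, map_fst_decrementAt _ _,
        fun m => step_eq_attach hc hmax⟩
  have hRm' : ∀ m : ℕ, Rm m = (runFrom ((u i₀, m) :: S₁) r₁ (post.map w)).2 := by
    intro m
    rw [hRm m, hmap m, R_eq, runFrom_append, runFrom_cons, ← hS₀, ← hr₀, hstep m]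
  have hbump1 : ∀ m : ℕ, bump ((u i₀, m) :: S₁) (u i₀) = (u i₀, m + 1) :: S₁ := by
    intro m
    rw [bump, if_pos rfl]
  -- nodup
  have hndall : ∀ m : ℕ,
      (((post.map w).map Prod.fst) ++ (((u i₀, m) :: S₁).map Prod.fst)).Nodup := by
    intro m
    have h1 : ((u i₀, m) :: S₁).map Prod.fst = u i₀ :: (pre.map u).reverse := by
      rw [List.map_cons, hfst, hS₀, map_fst_runFrom]
      simp [hw, List.map_map, Function.comp]
    have h2 : (post.map w).map Prod.fst = post.map u := by
      simp [hw, List.map_map, Function.comp]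
    rw [h1, h2]
    have hsrc : (pre.map u ++ u i₀ :: post.map u).Nodup := by
      have := List.Nodup.map huinj (List.nodup_finRange n)
      rw [hsplit, List.map_append, List.map_cons] at this
      exact this
    exact ((perm_helper (pre.map u) (post.map u) (u i₀)).symm.nodup hsrc)
  intro m
  have htrio := trio (post.map w) ((u i₀, m) :: S₁) r₁ (u i₀) m (u i₀) (m + 1)
    (hndall m) (List.mem_cons_self)
    (by rw [hbump1 m]; exact List.mem_cons_self) le_rfl
  rw [hbump1 m] at htrio
  rw [hbump1 (m + 1)] at htrio
  have h2eq : m + 1 + 1 = m + 2 := rfl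
  rw [h2eq] at htrio
  rcases htrio with ⟨q₁', l₁', q₂', l₂', -, -, -, hB, hC⟩ |
    ⟨q', l', a', ha, -, hB, hC⟩ | ⟨a'', ha, hB, hC⟩
  · left
    constructor
    · rw [hRm' (m + 1), hRm' m, hB]
    · rw [hRm' (m + 2), hRm' m, hC]
  · right; left
    constructor
    · rw [hRm' m, hRm' (m + 1), hB, ha]
    · rw [hRm' (m + 2), hRm' (m + 1), hB, hC]
  · right; right
    constructor
    · rw [hRm' m, hRm' (m + 1), hB, ha]
    · rw [hRm' (m + 1), hRm' (m + 2), hB, hC]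

/-! ### Arithmetic consequence of convexity -/

lemma convex_bound (Rm : ℕ → ℕ)
    (hc : ∀ m : ℕ, (Rm (m + 1) = Rm m ∧ Rm (m + 2) = Rm m)
      ∨ (Rm m = Rm (m + 1) + 1 ∧ Rm (m + 2) = Rm (m + 1))
      ∨ (Rm m = Rm (m + 1) + 1 ∧ Rm (m + 1) = Rm (m + 2) + 1)) (ℓ : ℕ) :
    ∀ k : ℕ, (Rm ℓ : ℤ) + ((ℓ : ℤ) - k) * ((Rm ℓ : ℤ) - Rm (ℓ + 1)) ≤ Rm k := by
  have hdd1 : ∀ m : ℕ, (Rm (m + 1) : ℤ) - Rm (m + 2) ≤ (Rm m : ℤ) - Rm (m + 1) := by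
    intro m
    rcases hc m with ⟨h1, h2⟩ | ⟨h1, h2⟩ | ⟨h1, h2⟩ <;> omega
  have hanti : ∀ a b : ℕ, a ≤ b → (Rm b : ℤ) - Rm (b + 1) ≤ (Rm a : ℤ) - Rm (a + 1) := by
    intro a b hab
    induction b with
    | zero => rw [Nat.le_zero.1 hab]
    | succ b ihb =>
      rcases Nat.eq_or_lt_of_le hab with rfl | hlt
      · exact le_rfl
      · exact le_trans (hdd1 b) (ihb (Nat.lt_succ_iff.1 hlt))
  have up : ∀ j : ℕ, (Rm ℓ : ℤ) - Rm (ℓ + j) ≤ j * ((Rm ℓ : ℤ) - Rm (ℓ + 1)) := by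
    intro j
    induction j with
    | zero => simp
    | succ j ih =>
      have h1 : (Rm (ℓ + j) : ℤ) - Rm (ℓ + j + 1) ≤ (Rm ℓ : ℤ) - Rm (ℓ + 1) :=
        hanti ℓ (ℓ + j) (Nat.le_add_right _ _)
      have he : ℓ + (j + 1) = ℓ + j + 1 := rfl
      rw [he]
      push_cast
      linarith
  have down : ∀ j : ℕ, j ≤ ℓ →
      (j : ℤ) * ((Rm ℓ : ℤ) - Rm (ℓ + 1)) ≤ (Rm (ℓ - j) : ℤ) - Rm ℓ := by
    intro j
    induction j with
    | zero => simp
    | succ j ih =>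
      intro hj
      have hj' : j ≤ ℓ := by omega
      have hsub : ℓ - (j + 1) + 1 = ℓ - j := by omega
      have h1 : (Rm ℓ : ℤ) - Rm (ℓ + 1) ≤ (Rm (ℓ - (j + 1)) : ℤ) - Rm (ℓ - (j + 1) + 1) :=
        hanti (ℓ - (j + 1)) ℓ (by omega)
      rw [hsub] at h1
      have ih' := ih hj'
      push_cast
      linarith
  intro k
  rcases le_or_gt ℓ k with h | h
  · obtain ⟨j, rfl⟩ : ∃ j, k = ℓ + j := ⟨k - ℓ, by omega⟩
    have := up j
    push_cast
    linarith
  · obtain ⟨j, hj, rfl⟩ : ∃ j, j ≤ ℓ ∧ k = ℓ - j := ⟨ℓ - k, by omega, by omega⟩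
    have := down j hj
    have hcast : ((ℓ - j : ℕ) : ℤ) = (ℓ : ℤ) - j := by omega
    rw [hcast]
    linarith

/-- Single random item comparison: if `μ` and `μ'` have the same mean and `μ'` is
supported on two consecutive integers, then `E[R_ν'] ≤ E[R_ν]`. -/
theorem single_random_life_comparison
    (μ μ' : Measure ℕ) [IsProbabilityMeasure μ] [IsProbabilityMeasure μ']
    (hμ0 : μ {0} = 0) (hμ'0 : μ' {0} = 0)
    (hfin : ∫⁻ k, (k : ℝ≥0∞) ∂μ ≠ ⊤)
    (hmean : ∫⁻ k, (k : ℝ≥0∞) ∂μ = ∫⁻ k, (k : ℝ≥0∞) ∂μ')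
    (ℓ : ℕ) (hℓ : 1 ≤ ℓ) (hsupp : ∀ i : ℕ, i ≠ ℓ → i ≠ ℓ + 1 → μ' {i} = 0)
    (n : ℕ) (hn : 1 ≤ n) (u : Fin n → ℝ)
    (hu : ∀ i, u i ∈ Set.Ioo (0 : ℝ) 1) (huinj : Function.Injective u)
    (i₀ : Fin n) (v : Fin n → ℕ) (hv : ∀ i, i ≠ i₀ → 1 ≤ v i)
    (Rm : ℕ → ℕ)
    (hRm : ∀ m : ℕ,
      Rm m = R ((List.finRange n).map fun i => (u i, if i = i₀ then m else v i))) :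
    ∫ k, (Rm k : ℝ) ∂μ' ≤ ∫ k, (Rm k : ℝ) ∂μ := by
  have hc := Rm_convex u huinj i₀ v Rm hRm
  set d : ℝ := (Rm ℓ : ℝ) - (Rm (ℓ + 1) : ℝ) with hd
  set c₀ : ℝ := (Rm ℓ : ℝ) + (ℓ : ℝ) * d with hc₀
  have hLf : ∀ k : ℕ, c₀ - (k : ℝ) * d ≤ (Rm k : ℝ) := by
    intro k
    have h := convex_bound Rm hc ℓ k
    have h2 : (Rm ℓ : ℝ) + ((ℓ : ℝ) - k) * d ≤ (Rm k : ℝ) := by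
      rw [hd]
      exact_mod_cast h
    rw [hc₀]
    linarith
  have hdec : ∀ m : ℕ, Rm (m + 1) ≤ Rm m := by
    intro m
    rcases hc m with ⟨h1, -⟩ | ⟨h1, -⟩ | ⟨h1, -⟩ <;> omega
  have hmono : ∀ k : ℕ, Rm k ≤ Rm 0 := by
    intro k
    induction k with
    | zero => exact le_rfl
    | succ k ih => exact le_trans (hdec k) ih
  have hfin' : ∫⁻ k, (k : ℝ≥0∞) ∂μ' ≠ ⊤ := hmean ▸ hfin
  -- integrability
  have hRint : ∀ (ν : Measure ℕ), IsProbabilityMeasure ν →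
      Integrable (fun k : ℕ => (Rm k : ℝ)) ν := by
    intro ν hν
    haveI := hν
    refine (integrable_const ((Rm 0 : ℕ) : ℝ)).mono'
      measurable_from_nat.aestronglyMeasurable (ae_of_all _ fun k => ?_)
    rw [Real.norm_natCast]
    exact_mod_cast hmono k
  have hIdint : ∀ (ν : Measure ℕ), (∫⁻ k, (k : ℝ≥0∞) ∂ν ≠ ⊤) →
      Integrable (fun k : ℕ => (k : ℝ)) ν := by
    intro ν hν
    refine ⟨measurable_from_nat.aestronglyMeasurable, ?_⟩
    have heq : ∫⁻ k : ℕ, (‖(k : ℝ)‖₊ : ℝ≥0∞) ∂ν = ∫⁻ k : ℕ, (k : ℝ≥0∞) ∂ν :=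
      lintegral_congr fun k => by simp
    show (∫⁻ k : ℕ, (‖(k : ℝ)‖₊ : ℝ≥0∞) ∂ν) < ⊤
    rw [heq]
    exact hν.lt_top
  have hLint : ∀ (ν : Measure ℕ), IsProbabilityMeasure ν →
      (∫⁻ k, (k : ℝ≥0∞) ∂ν ≠ ⊤) → Integrable (fun k : ℕ => c₀ - (k : ℝ) * d) ν := by
    intro ν hν hfinν
    haveI := hν
    exact (integrable_const c₀).sub ((hIdint ν hfinν).mul_const d)
  have hLval : ∀ (ν : Measure ℕ), IsProbabilityMeasure ν →
      (∫⁻ k, (k : ℝ≥0∞) ∂ν ≠ ⊤) →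
      ∫ k, (c₀ - (k : ℝ) * d) ∂ν = c₀ - (∫ k, (k : ℝ) ∂ν) * d := by
    intro ν hν hfinν
    haveI := hν
    rw [integral_sub (integrable_const c₀) ((hIdint ν hfinν).mul_const d),
      integral_const, integral_mul_const]
    simp
  have hmr : ∀ (ν : Measure ℕ), ∫ k, (k : ℝ) ∂ν = (∫⁻ k, (k : ℝ≥0∞) ∂ν).toReal := by
    intro ν
    rw [integral_eq_lintegral_of_nonneg_ae (ae_of_all _ fun k => by positivity)
      measurable_from_nat.aestronglyMeasurable]
    congr 1
    exact lintegral_congr fun k => by simp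
  have hMeq : ∫ k, (k : ℝ) ∂μ = ∫ k, (k : ℝ) ∂μ' := by
    rw [hmr, hmr, hmean]
  have hEq' : (fun k : ℕ => (Rm k : ℝ)) =ᵐ[μ'] fun k : ℕ => c₀ - (k : ℝ) * d := by
    have hnull : μ' {k : ℕ | k ≠ ℓ ∧ k ≠ ℓ + 1} = 0 := by
      have hcount : ({k : ℕ | k ≠ ℓ ∧ k ≠ ℓ + 1} : Set ℕ).Countable := Set.to_countable _
      have hrw : {k : ℕ | k ≠ ℓ ∧ k ≠ ℓ + 1}
          = ⋃ i ∈ {k : ℕ | k ≠ ℓ ∧ k ≠ ℓ + 1}, {i} :=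
        (Set.biUnion_of_singleton _).symm
      rw [hrw, measure_biUnion_null_iff hcount]
      intro i hi
      exact hsupp i hi.1 hi.2
    have hsubset : {k : ℕ | ¬ ((Rm k : ℝ) = c₀ - (k : ℝ) * d)}
        ⊆ {k : ℕ | k ≠ ℓ ∧ k ≠ ℓ + 1} := by
      intro k hk
      constructor
      · rintro rfl
        apply hk
        rw [hc₀]
        ring
      · rintro rfl
        apply hk
        rw [hc₀, hd]
        push_cast
        ring
    exact (ae_iff).2 (measure_mono_null hsubset hnull)
  calc ∫ k, (Rm k : ℝ) ∂μ' = ∫ k, (c₀ - (k : ℝ) * d) ∂μ' := integral_congr_ae hEq'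
    _ = c₀ - (∫ k, (k : ℝ) ∂μ') * d := hLval μ' ‹_› hfin'
    _ = c₀ - (∫ k, (k : ℝ) ∂μ) * d := by rw [hMeq]
    _ = ∫ k, (c₀ - (k : ℝ) * d) ∂μ := (hLval μ ‹_› hfin).symm
    _ ≤ ∫ k, (Rm k : ℝ) ∂μ :=
        integral_mono (hLint μ ‹_› hfin) (hRint μ ‹_›) hLf

end HeapPatience
end

section
/- Fix n ≥ 1 and pairwise distinct deterministic labels u_1,…,u_n ∈ (0,1). Let μ and μ' be probability distributions on {1,2,…} with the same finite mean, and assume μ' is supported on {ℓ, ℓ+1} for some ℓ ≥ 1. Let V = (ν_i)_{1≤i≤n} be i.i.d. with law μ and V' = (ν'_i)_{1≤i≤n} be i.i.d. with law μ', independent of V. Then E[R((u_i,ν'_i)_{1≤i≤n})] ≤ E[R((u_i,ν_i)_{1≤i≤n})]: among offspring laws with a given mean, the one supported on two consecutive integers requires in average the fewest heaps. -/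
open MeasureTheory ProbabilityTheory Filter Topology
open scoped ENNReal NNReal

namespace HeapPatience

noncomputable def cand (s : List (ℝ × ℕ)) (x : ℝ) : List (ℝ × ℕ) :=
  s.filter fun p => decide (0 < p.2 ∧ p.1 < x)

noncomputable def sel (s : List (ℝ × ℕ)) (x : ℝ) : Option ℝ :=
  ((cand s x).argmax Prod.fst).map Prod.fst

lemma step_eq_none_s11 {s : List (ℝ × ℕ)} {x : ℝ} (r : ℕ) (v : ℕ) (h : sel s x = none) :
    step (s, r) (x, v) = ((x, v) :: s, r + 1) := by
  unfold step
  have h' : (s.filter fun p => decide (0 < p.2 ∧ p.1 < x)).argmax Prod.fst = none := by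
    simpa [sel, cand] using h
  rw [show ((x, v) : ℝ × ℕ).1 = x from rfl, h']

lemma step_eq_some_s11 {s : List (ℝ × ℕ)} {x : ℝ} {y : ℝ} (r : ℕ) (v : ℕ) (h : sel s x = some y) :
    step (s, r) (x, v) = ((x, v) :: decrementAt s y, r) := by
  unfold step
  obtain ⟨q, hq, rfl⟩ : ∃ q, (s.filter fun p => decide (0 < p.2 ∧ p.1 < x)).argmax Prod.fst
      = some q ∧ q.1 = y := by
    unfold sel cand at h
    cases h' : (s.filter fun p => decide (0 < p.2 ∧ p.1 < x)).argmax Prod.fst with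
    | none => rw [h'] at h; simp at h
    | some q => rw [h'] at h; exact ⟨q, rfl, by simpa using h⟩
  rw [show ((x, v) : ℝ × ℕ).1 = x from rfl, hq]

lemma decrementAt_map_fst (s : List (ℝ × ℕ)) (x : ℝ) :
    (decrementAt s x).map Prod.fst = s.map Prod.fst := by
  induction s with
  | nil => rfl
  | cons p rest ih =>
    by_cases h : p.1 = x ∧ 0 < p.2 <;> simp [decrementAt, h, ih]

lemma step_map_fst (a : List (ℝ × ℕ) × ℕ) (it : ℝ × ℕ) :
    (step a it).1.map Prod.fst = it.1 :: a.1.map Prod.fst := by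
  unfold step
  cases h : (a.1.filter fun p => decide (0 < p.2 ∧ p.1 < it.1)).argmax Prod.fst <;>
    simp [h, decrementAt_map_fst]

lemma decrementAt_append (l₁ l₂ : List (ℝ × ℕ)) (y : ℝ) :
    decrementAt (l₁ ++ l₂) y =
      if ∃ p ∈ l₁, p.1 = y ∧ 0 < p.2 then decrementAt l₁ y ++ l₂
      else l₁ ++ decrementAt l₂ y := by
  induction l₁ with
  | nil => simp [decrementAt]
  | cons p rest ih =>
    by_cases hp : p.1 = y ∧ 0 < p.2
    · rw [if_pos ⟨p, List.mem_cons_self, hp⟩]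
      simp [decrementAt, hp]
    · have : decrementAt ((p :: rest) ++ l₂) y = p :: decrementAt (rest ++ l₂) y := by
        simp [decrementAt, hp]
      rw [this, ih]
      by_cases h : ∃ q ∈ rest, q.1 = y ∧ 0 < q.2
      · rw [if_pos h, if_pos ⟨_, List.mem_cons_of_mem _ h.choose_spec.1, h.choose_spec.2⟩]
        simp [decrementAt, hp]
      · rw [if_neg h, if_neg]
        · simp
        · rintro ⟨q, hq, hq2⟩
          rcases List.mem_cons.1 hq with rfl | hq
          · exact hp hq2
          · exact h ⟨q, hq, hq2⟩
/-- `t` is `s` with one extra life at the (unique) entry with label `w`. -/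
def Rel1 (w : ℝ) (s t : List (ℝ × ℕ)) : Prop :=
  ∃ s₁ s₂ m, s = s₁ ++ (w, m) :: s₂ ∧ t = s₁ ++ (w, m + 1) :: s₂

lemma Rel1.map_fst {w : ℝ} {s t : List (ℝ × ℕ)} (h : Rel1 w s t) :
    s.map Prod.fst = t.map Prod.fst := by
  obtain ⟨s₁, s₂, m, rfl, rfl⟩ := h; simp

lemma Rel1.decrement {w y : ℝ} {s t : List (ℝ × ℕ)} (h : Rel1 w s t) (hy : y ≠ w) :
    Rel1 w (decrementAt s y) (decrementAt t y) := by
  obtain ⟨s₁, s₂, m, rfl, rfl⟩ := h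
  have hmid : ∀ m' : ℕ, decrementAt ((w, m') :: s₂) y = (w, m') :: decrementAt s₂ y := by
    intro m'
    simp [decrementAt, hy.symm]
  rw [decrementAt_append, decrementAt_append]
  by_cases hh : ∃ p ∈ s₁, p.1 = y ∧ 0 < p.2
  · rw [if_pos hh, if_pos hh]
    exact ⟨decrementAt s₁ y, s₂, m, rfl, rfl⟩
  · rw [if_neg hh, if_neg hh, hmid, hmid]
    exact ⟨s₁, decrementAt s₂ y, m, rfl, rfl⟩

lemma decrementAt_split {s₁ s₂ : List (ℝ × ℕ)} {w : ℝ} {m : ℕ}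
    (hw : w ∉ s₁.map Prod.fst) (hm : 0 < m) :
    decrementAt (s₁ ++ (w, m) :: s₂) w = s₁ ++ (w, m - 1) :: s₂ := by
  rw [decrementAt_append, if_neg, decrementAt]
  · simp [hm]
  · rintro ⟨p, hp, hp1, -⟩
    exact hw (hp1 ▸ List.mem_map_of_mem (f := Prod.fst) hp)

/-- custom argmax characterization for lists with a strictly maximal element. -/
lemma argmax_eq_of_strict {l : List (ℝ × ℕ)} {a : ℝ × ℕ} (ha : a ∈ l)
    (hstrict : ∀ b ∈ l, b ≠ a → b.1 < a.1) : l.argmax Prod.fst = some a := by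
  rw [List.argmax_eq_some_iff]
  refine ⟨ha, fun b hb => ?_, fun b hb hba => ?_⟩
  · rcases eq_or_ne b a with rfl | hne
    · exact le_rfl
    · exact (hstrict b hb hne).le
  · rcases eq_or_ne b a with rfl | hne
    · exact le_rfl
    · exact absurd hba (not_le.2 (hstrict b hb hne))

lemma cand_nodup_fst {s : List (ℝ × ℕ)} (h : (s.map Prod.fst).Nodup) (x : ℝ) :
    ((cand s x).map Prod.fst).Nodup :=
  h.sublist ((List.filter_sublist (l := s)).map Prod.fst)

lemma mem_cand {s : List (ℝ × ℕ)} {x : ℝ} {p : ℝ × ℕ} :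
    p ∈ cand s x ↔ p ∈ s ∧ 0 < p.2 ∧ p.1 < x := by
  simp [cand, List.mem_filter]

lemma mem_cand_up {w x : ℝ} {s t : List (ℝ × ℕ)} (h : Rel1 w s t) {p : ℝ × ℕ}
    (hp : p ∈ cand s x) : ∃ q ∈ cand t x, q.1 = p.1 := by
  obtain ⟨s₁, s₂, m, rfl, rfl⟩ := h
  rw [mem_cand] at hp
  obtain ⟨hps, hp2, hp1⟩ := hp
  rcases List.mem_append.1 hps with h1 | h1
  · exact ⟨p, mem_cand.2 ⟨List.mem_append_left _ h1, hp2, hp1⟩, rfl⟩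
  · rcases List.mem_cons.1 h1 with rfl | h1
    · exact ⟨(w, m + 1), mem_cand.2 ⟨List.mem_append_right _ (List.mem_cons_self),
        Nat.succ_pos m, hp1⟩, rfl⟩
    · exact ⟨p, mem_cand.2 ⟨List.mem_append_right _ (List.mem_cons_of_mem _ h1), hp2, hp1⟩, rfl⟩
lemma eq_of_fst_eq {l : List (ℝ × ℕ)} (h : (l.map Prod.fst).Nodup) {b c : ℝ × ℕ}
    (hb : b ∈ l) (hc : c ∈ l) (h1 : b.1 = c.1) : b = c :=
  List.inj_on_of_nodup_map h hb hc h1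

lemma sel_eq_some {s : List (ℝ × ℕ)} {x : ℝ} {q : ℝ × ℕ}
    (h : (cand s x).argmax Prod.fst = some q) : sel s x = some q.1 := by
  simp [sel, h]

lemma stepPair {s t : List (ℝ × ℕ)} {w x : ℝ} (v r r' : ℕ)
    (hnd : (s.map Prod.fst).Nodup) (hrel : Rel1 w s t) :
    (∃ w', w' ≤ w ∧ Rel1 w' (step (s, r) (x, v)).1 (step (t, r') (x, v)).1 ∧
       (step (s, r) (x, v)).2 + r' = (step (t, r') (x, v)).2 + r ∧
       (w' = w ∨ (sel s x = some w' ∧ w < x)))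
    ∨ ((step (s, r) (x, v)).1 = (step (t, r') (x, v)).1 ∧ (step (s, r) (x, v)).2 = r + 1 ∧
       (step (t, r') (x, v)).2 = r' ∧ cand s x = [] ∧ w < x) := by
  obtain ⟨s₁, s₂, m, rfl, rfl⟩ := hrel
  set S := s₁ ++ (w, m) :: s₂ with hS
  set T := s₁ ++ (w, m + 1) :: s₂ with hT
  have h0 : (s₁.map Prod.fst ++ w :: s₂.map Prod.fst).Nodup := by simpa [hS] using hnd
  obtain ⟨hn1, hn2, hdisj⟩ := List.nodup_append.1 h0
  have hw1 : w ∉ s₁.map Prod.fst := fun h => hdisj _ h _ List.mem_cons_self rfl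
  have hw2 : w ∉ s₂.map Prod.fst := (List.nodup_cons.1 hn2).1
  have hb1 : ∀ b ∈ cand s₁ x, b.1 ≠ w := by
    intro b hb hbw
    exact hw1 (hbw ▸ List.mem_map_of_mem (f := Prod.fst) (mem_cand.1 hb).1)
  have hb2 : ∀ b ∈ cand s₂ x, b.1 ≠ w := by
    intro b hb hbw
    exact hw2 (hbw ▸ List.mem_map_of_mem (f := Prod.fst) (mem_cand.1 hb).1)
  by_cases hpar : ¬ w < x ∨ 0 < m
  · -- parallel case: the filtered lists have the same labels
    have hcs : cand S x = cand s₁ x ++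
        (if 0 < m ∧ w < x then [(w, m)] else []) ++ cand s₂ x := by
      by_cases h : 0 < m ∧ w < x <;> simp [cand, hS, List.filter_append, List.filter_cons, h]
    have hct : cand T x = cand s₁ x ++
        (if w < x then [(w, m + 1)] else []) ++ cand s₂ x := by
      by_cases h : w < x <;>
        simp [cand, hT, List.filter_append, List.filter_cons, h, Nat.succ_pos]
    have hlabeq : (cand S x).map Prod.fst = (cand T x).map Prod.fst := by
      rw [hcs, hct]
      rcases hpar with h | h
      · rw [if_neg fun hc => h hc.2, if_neg h]
      · by_cases hx : w < x
        · rw [if_pos ⟨h, hx⟩, if_pos hx]; simp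
        · rw [if_neg fun hc => hx hc.2, if_neg hx]
    have hup : ∀ b ∈ cand S x, ∃ b' ∈ cand T x, b'.1 = b.1 :=
      fun b hb => mem_cand_up ⟨s₁, s₂, m, rfl, rfl⟩ hb
    cases hat : (cand T x).argmax Prod.fst with
    | none =>
      have hTnil : cand T x = [] := List.argmax_eq_none.1 hat
      have hSnil : cand S x = [] := by
        have := hlabeq
        rw [hTnil] at this
        simpa using List.map_eq_nil_iff.1 this
      have hselS : sel S x = none := by simp [sel, hSnil]
      have hselT : sel T x = none := by simp [sel, hTnil]
      left
      rw [step_eq_none_s11 r v hselS, step_eq_none_s11 r' v hselT]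
      exact ⟨w, le_rfl, ⟨(x, v) :: s₁, s₂, m, rfl, rfl⟩, by omega, Or.inl rfl⟩
    | some q =>
      have hqT : q ∈ cand T x := List.argmax_mem hat
      have hqx : q.1 < x := (mem_cand.1 hqT).2.2
      have hndS : ((cand S x).map Prod.fst).Nodup := cand_nodup_fst hnd x
      have hmax : ∀ b ∈ cand S x, b.1 ≤ q.1 := by
        intro b hb
        obtain ⟨b', hb', hb'1⟩ := hup b hb
        rw [← hb'1]
        exact List.le_of_mem_argmax hb' hat
      have key : ∃ p ∈ cand S x, p.1 = q.1 ∧ (cand S x).argmax Prod.fst = some p := by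
        have : q.1 ∈ (cand S x).map Prod.fst := by
          rw [hlabeq]; exact List.mem_map_of_mem (f := Prod.fst) hqT
        obtain ⟨p, hp, hp1⟩ := List.mem_map.1 this
        refine ⟨p, hp, hp1, argmax_eq_of_strict hp fun b hb hbp => ?_⟩
        have hble : b.1 ≤ p.1 := by rw [hp1]; exact hmax b hb
        rcases lt_or_eq_of_le hble with h | h
        · exact h
        · exact absurd (eq_of_fst_eq hndS hb hp h) hbp
      obtain ⟨p, hpS, hp1, hasS⟩ := key
      have hselS : sel S x = some q.1 := by rw [← hp1]; exact sel_eq_some hasS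
      have hselT : sel T x = some q.1 := sel_eq_some hat
      left
      rw [step_eq_some_s11 r v hselS, step_eq_some_s11 r' v hselT]
      by_cases hqw : q.1 = w
      · -- both decrement the w entry; must have 0 < m
        have hwx : w < x := hqw ▸ hqx
        have hm : 0 < m := by
          rcases hpar with h | h
          · exact absurd hwx h
          · exact h
        have hdS : decrementAt S w = s₁ ++ (w, m - 1) :: s₂ := decrementAt_split hw1 hm
        have hdT : decrementAt T w = s₁ ++ (w, m) :: s₂ := by
          have := decrementAt_split (s₁ := s₁) (s₂ := s₂) (w := w) (m := m + 1)
            hw1 (Nat.succ_pos m)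
          simpa using this
        refine ⟨w, le_rfl, ?_, Nat.add_comm r r', Or.inl rfl⟩
        rw [hqw]
        simp only [hdS, hdT]
        exact ⟨(x, v) :: s₁, s₂, m - 1, by simp, by simp; omega⟩
      · refine ⟨w, le_rfl, ?_, Nat.add_comm r r', Or.inl rfl⟩
        obtain ⟨u₁, u₂, m', h1, h2⟩ :=
          Rel1.decrement (y := q.1) ⟨s₁, s₂, m, rfl, rfl⟩ hqw
        exact ⟨(x, v) :: u₁, u₂, m', by simp [hS, h1], by simp [hT, h2]⟩
  · -- divergence possible : w < x and m = 0
    push_neg at hpar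
    obtain ⟨hwx, hm0⟩ := hpar
    have hm0' : m = 0 := by omega
    subst hm0'
    have hcs : cand S x = cand s₁ x ++ cand s₂ x := by
      simp [cand, hS, List.filter_append, List.filter_cons]
    have hct : cand T x = cand s₁ x ++ (w, 1) :: cand s₂ x := by
      simp [cand, hT, List.filter_append, List.filter_cons, hwx]
    have hdown : ∀ b ∈ cand S x, b ∈ cand T x := by
      intro b hb
      rw [hcs] at hb; rw [hct]
      rcases List.mem_append.1 hb with h | h
      · exact List.mem_append_left _ h
      · exact List.mem_append_right _ (List.mem_cons_of_mem _ h)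
    have hbw : ∀ b ∈ cand S x, b.1 ≠ w := by
      intro b hb
      rw [hcs] at hb
      rcases List.mem_append.1 hb with h | h
      · exact hb1 b h
      · exact hb2 b h
    have hTne : cand T x ≠ [] := by rw [hct]; simp
    cases hat : (cand T x).argmax Prod.fst with
    | none => exact absurd (List.argmax_eq_none.1 hat) hTne
    | some q =>
      have hselT : sel T x = some q.1 := sel_eq_some hat
      have hndS : ((cand S x).map Prod.fst).Nodup := cand_nodup_fst hnd x
      by_cases hqw : q.1 = w
      · -- T attaches at w
        have hdT : decrementAt T w = S := by
          have := decrementAt_split (s₁ := s₁) (s₂ := s₂) (w := w) (m := 1) hw1 one_pos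
          simpa [hS, hT] using this
        have hblt : ∀ b ∈ cand S x, b.1 < w := by
          intro b hb
          have h1 : b.1 ≤ q.1 := List.le_of_mem_argmax (hdown b hb) hat
          exact lt_of_le_of_ne (hqw ▸ h1) (hbw b hb)
        cases has : (cand S x).argmax Prod.fst with
        | none =>
          -- merge!
          have hSnil : cand S x = [] := List.argmax_eq_none.1 has
          have hselS : sel S x = none := by simp [sel, hSnil]
          right
          rw [step_eq_none_s11 r v hselS, step_eq_some_s11 r' v hselT, hqw, hdT]
          exact ⟨rfl, rfl, rfl, hSnil, hwx⟩
        | some a =>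
          have haS : a ∈ cand S x := List.argmax_mem has
          have hselS : sel S x = some a.1 := sel_eq_some has
          obtain ⟨haSmem, ha2, hax⟩ := mem_cand.1 haS
          obtain ⟨u₁, u₂, hsplit⟩ := List.append_of_mem haSmem
          have ha1u : a.1 ∉ u₁.map Prod.fst := by
            have hnd2 : ((u₁ ++ a :: u₂).map Prod.fst).Nodup := hsplit ▸ hnd
            rw [List.map_append, List.map_cons] at hnd2
            obtain ⟨-, -, hd⟩ := List.nodup_append.1 hnd2
            exact fun h => hd _ h _ List.mem_cons_self rfl
          have hdS : decrementAt S a.1 = u₁ ++ (a.1, a.2 - 1) :: u₂ := by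
            rw [hsplit]
            have := decrementAt_split (s₁ := u₁) (s₂ := u₂) (w := a.1) (m := a.2) ha1u ha2
            simpa using this
          left
          rw [step_eq_some_s11 r v hselS, step_eq_some_s11 r' v hselT, hqw, hdT, hdS]
          refine ⟨a.1, (hblt a haS).le, ?_, Nat.add_comm r r', Or.inr ⟨hselS, hwx⟩⟩
          exact ⟨(x, v) :: u₁, u₂, a.2 - 1, by simp,
            by have h3 : a.2 - 1 + 1 = a.2 := Nat.sub_add_cancel ha2
               simp only [hsplit, h3, List.cons_append, Prod.mk.eta]⟩
      · -- q is not the w entry : both attach at q.1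
        have hqS : q ∈ cand S x := by
          have hqT : q ∈ cand T x := List.argmax_mem hat
          rw [hct] at hqT; rw [hcs]
          rcases List.mem_append.1 hqT with h | h
          · exact List.mem_append_left _ h
          · rcases List.mem_cons.1 h with rfl | h
            · exact absurd rfl hqw
            · exact List.mem_append_right _ h
        have hasS : (cand S x).argmax Prod.fst = some q := by
          refine argmax_eq_of_strict hqS fun b hb hbq => ?_
          have h1 : b.1 ≤ q.1 := List.le_of_mem_argmax (hdown b hb) hat
          rcases lt_or_eq_of_le h1 with h | h
          · exact h
          · exact absurd (eq_of_fst_eq hndS hb hqS h) hbq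
        have hselS : sel S x = some q.1 := sel_eq_some hasS
        left
        rw [step_eq_some_s11 r v hselS, step_eq_some_s11 r' v hselT]
        refine ⟨w, le_rfl, ?_, Nat.add_comm r r', Or.inl rfl⟩
        obtain ⟨u₁, u₂, m', h1, h2⟩ :=
          Rel1.decrement (y := q.1) ⟨s₁, s₂, 0, rfl, rfl⟩ hqw
        exact ⟨(x, v) :: u₁, u₂, m', by simp [hS, h1], by simp [hT, h2]⟩
def PairInv (B C : List (ℝ × ℕ) × ℕ) : Prop :=
  (∃ w, Rel1 w B.1 C.1 ∧ B.2 = C.2) ∨ (B.1 = C.1 ∧ B.2 = C.2 + 1)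

def TInv (A B C : List (ℝ × ℕ) × ℕ) : Prop :=
  (∃ w1 w2, w1 ≤ w2 ∧ Rel1 w1 A.1 B.1 ∧ Rel1 w2 B.1 C.1 ∧ A.2 = B.2 ∧ B.2 = C.2)
  ∨ (A.1 = B.1 ∧ A.2 = B.2 + 1 ∧ PairInv B C)

lemma step_state_roots (s : List (ℝ × ℕ)) (r r' : ℕ) (it : ℝ × ℕ) :
    (step (s, r) it).1 = (step (s, r') it).1 ∧
      (step (s, r) it).2 + r' = (step (s, r') it).2 + r := by
  obtain ⟨x, v⟩ := it
  cases h : sel s x with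
  | none => rw [step_eq_none_s11 r v h, step_eq_none_s11 r' v h]; exact ⟨rfl, by omega⟩
  | some y => rw [step_eq_some_s11 r v h, step_eq_some_s11 r' v h]; exact ⟨rfl, by omega⟩

lemma alive_mem_cand {w x : ℝ} {s t : List (ℝ × ℕ)} (h : Rel1 w s t) (hwx : w < x) :
    ∃ p ∈ cand t x, p.1 = w := by
  obtain ⟨s₁, s₂, m, rfl, rfl⟩ := h
  exact ⟨(w, m + 1), mem_cand.2 ⟨List.mem_append_right _ (List.mem_cons_self),
    Nat.succ_pos m, hwx⟩, rfl⟩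

lemma TInv_step {A B C : List (ℝ × ℕ) × ℕ} {x : ℝ} {v : ℕ}
    (hnd : (A.1.map Prod.fst).Nodup) (h : TInv A B C) :
    TInv (step A (x, v)) (step B (x, v)) (step C (x, v)) := by
  obtain ⟨sA, rA⟩ := A
  obtain ⟨sB, rB⟩ := B
  obtain ⟨sC, rC⟩ := C
  simp only at hnd
  rcases h with ⟨w1, w2, h12, hAB, hBC, hrAB, hrBC⟩ | ⟨hABs, hABr, hP⟩
  · simp only at hAB hBC hrAB hrBC
    subst hrAB; subst hrBC
    have hndB : (sB.map Prod.fst).Nodup := hAB.map_fst ▸ hnd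
    rcases stepPair (s := sB) (t := sC) v rA rA hndB hBC with
      ⟨w2', hw2le, hrelBC', hsum2, halt2⟩ | ⟨-, -, -, hBnil, hw2x⟩
    · rcases stepPair (s := sA) (t := sB) v rA rA hnd hAB with
        ⟨w1', hw1le, hrelAB', hsum1, halt1⟩ | ⟨hSeq, hS2, hT2, -, -⟩
      · -- both pairs still active
        left
        refine ⟨w1', w2', ?_, hrelAB', hrelBC', by omega, by omega⟩
        rcases halt2 with rfl | ⟨hselB, hw2x⟩
        · exact le_trans hw1le h12
        · -- sel sB x = some w2'   (B attaches at w2')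
          obtain ⟨qB, hqB, hqB1⟩ : ∃ q, (cand sB x).argmax Prod.fst = some q ∧ q.1 = w2' := by
            unfold sel at hselB
            cases hq : (cand sB x).argmax Prod.fst with
            | none => rw [hq] at hselB; simp at hselB
            | some q => rw [hq] at hselB; exact ⟨q, rfl, by simpa using hselB⟩
          rcases halt1 with rfl | ⟨hselA, hw1x⟩
          · -- w1' = w1 : the entry with label w1 is alive in B and a candidate
            obtain ⟨p, hp, hp1⟩ := alive_mem_cand hAB (lt_of_le_of_lt h12 hw2x)
            have := List.le_of_mem_argmax hp hqB
            rw [hp1, hqB1] at this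
            exact this
          · -- w1' is the argmax of cand sA x
            obtain ⟨pA, hpA, hpA1⟩ : ∃ p, (cand sA x).argmax Prod.fst = some p ∧ p.1 = w1' := by
              unfold sel at hselA
              cases hq : (cand sA x).argmax Prod.fst with
              | none => rw [hq] at hselA; simp at hselA
              | some p => rw [hq] at hselA; exact ⟨p, rfl, by simpa using hselA⟩
            obtain ⟨q', hq', hq'1⟩ := mem_cand_up hAB (List.argmax_mem hpA)
            have := List.le_of_mem_argmax hq' hqB
            rw [hq'1, hpA1, hqB1] at this
            exact this
      · -- AB merged
        right
        refine ⟨hSeq, by omega, Or.inl ⟨w2', hrelBC', by omega⟩⟩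
    · -- BC merge is impossible : the w1 entry is alive in B and below x
      exfalso
      obtain ⟨p, hp, -⟩ := alive_mem_cand hAB (lt_of_le_of_lt h12 hw2x)
      rw [hBnil] at hp
      exact List.not_mem_nil hp
  · -- phase two
    simp only at hABs hABr
    subst hABs
    have hstep := step_state_roots sA rA rB (x, v)
    right
    refine ⟨hstep.1, by omega, ?_⟩
    rcases hP with ⟨w, hrel, hr⟩ | ⟨hBCs, hr⟩
    · simp only at hrel hr
      subst hr
      rcases stepPair (s := sA) (t := sC) v rB rB hnd hrel with
        ⟨w', -, hrel', hsum, -⟩ | ⟨hSeq, hS2, hT2, -, -⟩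
      · exact Or.inl ⟨w', hrel', by omega⟩
      · exact Or.inr ⟨hSeq, by omega⟩
    · simp only at hBCs hr
      subst hBCs
      have hstep2 := step_state_roots sA rB rC (x, v)
      exact Or.inr ⟨hstep2.1, by omega⟩

lemma TInv_fold : ∀ (items : List (ℝ × ℕ)) {A B C : List (ℝ × ℕ) × ℕ}
    (_ : (items.map Prod.fst ++ A.1.map Prod.fst).Nodup) (_ : TInv A B C),
    TInv (items.foldl step A) (items.foldl step B) (items.foldl step C)
  | [], _, _, _, _, h => h
  | it :: rest, A, B, C, hnd, h => by
    simp only [List.foldl_cons]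
    rw [List.map_cons, List.cons_append] at hnd
    have hndA : (A.1.map Prod.fst).Nodup := (List.nodup_append.1 (List.nodup_cons.1 hnd).2).2.1
    have hstep : TInv (step A it) (step B it) (step C it) := by
      have := TInv_step (x := it.1) (v := it.2) hndA h
      rwa [Prod.mk.eta] at this
    apply TInv_fold rest _ hstep
    rw [step_map_fst]
    exact List.perm_middle.symm.nodup hnd
lemma foldl_map_fst : ∀ (items : List (ℝ × ℕ)) (a : List (ℝ × ℕ) × ℕ),
    ((items.foldl step a).1).map Prod.fst = (items.map Prod.fst).reverse ++ a.1.map Prod.fst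
  | [], a => by simp
  | it :: rest, a => by
    rw [List.foldl_cons, foldl_map_fst rest, step_map_fst]
    simp

lemma step_roots_le (a : List (ℝ × ℕ) × ℕ) (it : ℝ × ℕ) : (step a it).2 ≤ a.2 + 1 := by
  obtain ⟨s, r⟩ := a
  obtain ⟨x, v⟩ := it
  cases h : sel s x with
  | none => rw [step_eq_none_s11 r v h]
  | some y => rw [step_eq_some_s11 r v h]; omega

lemma foldl_roots_le : ∀ (items : List (ℝ × ℕ)) (a : List (ℝ × ℕ) × ℕ),
    (items.foldl step a).2 ≤ a.2 + items.length
  | [], a => by simp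
  | it :: rest, a => by
    rw [List.foldl_cons]
    calc (rest.foldl step (step a it)).2 ≤ (step a it).2 + rest.length :=
          foldl_roots_le rest _
      _ ≤ a.2 + 1 + rest.length := by have := step_roots_le a it; omega
      _ = a.2 + (it :: rest).length := by simp; omega

lemma R_le_length (items : List (ℝ × ℕ)) : R items ≤ items.length := by
  have := foldl_roots_le items ([], 0)
  simpa [R, run] using this

lemma R_update_convex {n : ℕ} {u : Fin n → ℝ} (huinj : Function.Injective u)
    (w : Fin n → ℕ) (i : Fin n) (k : ℕ) :
    2 * R ((List.finRange n).map fun j => (u j, Function.update w i (k + 1) j))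
      ≤ R ((List.finRange n).map fun j => (u j, Function.update w i k j))
        + R ((List.finRange n).map fun j => (u j, Function.update w i (k + 2) j)) := by
  obtain ⟨pre, post, hsplit⟩ := List.append_of_mem (List.mem_finRange i)
  set preL : List (ℝ × ℕ) := pre.map fun j => (u j, w j) with hpreL
  set postL : List (ℝ × ℕ) := post.map fun j => (u j, w j) with hpostL
  have hnfin : (pre ++ i :: post).Nodup := hsplit ▸ List.nodup_finRange n
  have hipre : i ∉ pre := by
    intro h
    have := List.disjoint_of_nodup_append hnfin h (List.mem_cons_self)
    exact this
  have hipost : i ∉ post := by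
    have := (List.nodup_append.1 hnfin).2.1
    exact (List.nodup_cons.1 this).1
  have hmapk : ∀ k' : ℕ, ((List.finRange n).map fun j => (u j, Function.update w i k' j))
      = preL ++ (u i, k') :: postL := by
    intro k'
    have h1 : (pre.map fun j => (u j, Function.update w i k' j)) = preL := by
      apply List.map_congr_left
      intro j hj
      have hne : j ≠ i := fun hji => hipre (by rw [← hji]; exact hj)
      rw [Function.update_of_ne hne]
    have h2 : (post.map fun j => (u j, Function.update w i k' j)) = postL := by
      apply List.map_congr_left
      intro j hj
      have hne : j ≠ i := fun hji => hipost (by rw [← hji]; exact hj)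
      rw [Function.update_of_ne hne]
    rw [hsplit, List.map_append, List.map_cons, h1, h2, Function.update_self]
  have hRk : ∀ k' : ℕ, R ((List.finRange n).map fun j => (u j, Function.update w i k' j))
      = (postL.foldl step (step (preL.foldl step ([], 0)) (u i, k'))).2 := by
    intro k'
    rw [R, run, hmapk, List.foldl_append, List.foldl_cons]
  set a0 := preL.foldl step ([], 0) with ha0
  obtain ⟨z, r1, hz, hzf⟩ : ∃ z r1, (∀ k', step a0 (u i, k') = ((u i, k') :: z, r1)) ∧
      z.map Prod.fst = a0.1.map Prod.fst := by
    cases h : sel a0.1 (u i) with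
    | none =>
      refine ⟨a0.1, a0.2 + 1, fun k' => ?_, rfl⟩
      have := step_eq_none_s11 (s := a0.1) (x := u i) a0.2 k' h
      rwa [Prod.mk.eta] at this
    | some y =>
      refine ⟨decrementAt a0.1 y, a0.2, fun k' => ?_, decrementAt_map_fst _ _⟩
      have := step_eq_some_s11 (s := a0.1) (x := u i) a0.2 k' h
      rwa [Prod.mk.eta] at this
  have hTinit : TInv ((u i, k) :: z, r1) ((u i, k + 1) :: z, r1) ((u i, k + 2) :: z, r1) :=
    Or.inl ⟨u i, u i, le_rfl, ⟨[], z, k, rfl, rfl⟩, ⟨[], z, k + 1, rfl, rfl⟩, rfl, rfl⟩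
  -- the nodup hypothesis for the fold over postL
  have hNu : (pre.map u ++ u i :: post.map u).Nodup := by
    have h1 : ((pre ++ i :: post).map u).Nodup := hnfin.map huinj
    simpa using h1
  have ha0f : a0.1.map Prod.fst = (pre.map u).reverse := by
    rw [ha0, foldl_map_fst]
    simp [hpreL, List.map_map, Function.comp_def]
  have hpostf : postL.map Prod.fst = post.map u := by
    simp [hpostL, List.map_map, Function.comp_def]
  have hnodup : (postL.map Prod.fst ++ ((u i, k) :: z).map Prod.fst).Nodup := by
    rw [hpostf, List.map_cons, hzf, ha0f]
    have p1 : (post.map u ++ u i :: (pre.map u).reverse).Perm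
        (u i :: (post.map u ++ (pre.map u).reverse)) := List.perm_middle
    have p2 : (post.map u ++ (pre.map u).reverse).Perm (pre.map u ++ post.map u) :=
      List.perm_append_comm.trans (((pre.map u).reverse_perm).append_right _)
    have p3 : (u i :: (pre.map u ++ post.map u)).Perm (pre.map u ++ u i :: post.map u) :=
      List.perm_middle.symm
    exact ((p1.trans ((p2.cons _).trans p3)).symm).nodup hNu
  have hfinal := TInv_fold postL hnodup hTinit
  rw [hRk k, hRk (k + 1), hRk (k + 2), hz k, hz (k + 1), hz (k + 2)]
  rcases hfinal with ⟨w1, w2, -, -, -, hr1, hr2⟩ | ⟨-, hr1, hP⟩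
  · omega
  · rcases hP with ⟨-, -, hr2⟩ | ⟨-, hr2⟩ <;> omega
lemma nat_lintegral_nnnorm (ν : Measure ℕ) :
    ∫⁻ k, ‖(k : ℝ)‖ₑ ∂ν = ∫⁻ k, (k : ℝ≥0∞) ∂ν := by
  apply lintegral_congr
  intro k
  exact Real.enorm_natCast k

lemma single_coord (μ μ' : Measure ℕ) [IsProbabilityMeasure μ] [IsProbabilityMeasure μ']
    (hfin : ∫⁻ k, (k : ℝ≥0∞) ∂μ ≠ ⊤)
    (hmean : ∫⁻ k, (k : ℝ≥0∞) ∂μ = ∫⁻ k, (k : ℝ≥0∞) ∂μ')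
    (ℓ : ℕ) (hsupp : ∀ i : ℕ, i ≠ ℓ → i ≠ ℓ + 1 → μ' {i} = 0)
    (f : ℕ → ℝ) (C : ℝ) (hb : ∀ k, |f k| ≤ C)
    (hconv : ∀ k, 2 * f (k + 1) ≤ f k + f (k + 2)) :
    ∫ k, f k ∂μ' ≤ ∫ k, f k ∂μ := by
  set Δ : ℝ := f (ℓ + 1) - f ℓ with hΔ
  set L : ℕ → ℝ := fun k => (f ℓ - Δ * ℓ) + Δ * (k : ℝ) with hL
  -- integrability of f
  have hfi : ∀ (ν : Measure ℕ) [IsProbabilityMeasure ν], Integrable f ν := fun ν _ =>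
    (integrable_const C).mono' measurable_from_nat.aestronglyMeasurable
      (Filter.Eventually.of_forall fun k => by rw [Real.norm_eq_abs]; exact hb k)
  -- integrability of the identity
  have hNi : Integrable (fun k : ℕ => (k : ℝ)) μ := by
    refine ⟨measurable_from_nat.aestronglyMeasurable, ?_⟩
    rw [MeasureTheory.HasFiniteIntegral, nat_lintegral_nnnorm]
    exact lt_top_iff_ne_top.2 hfin
  have hNi' : Integrable (fun k : ℕ => (k : ℝ)) μ' := by
    refine ⟨measurable_from_nat.aestronglyMeasurable, ?_⟩
    rw [MeasureTheory.HasFiniteIntegral, nat_lintegral_nnnorm]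
    exact lt_top_iff_ne_top.2 (hmean ▸ hfin)
  -- equality of the means
  have hmeq : ∫ k, (k : ℝ) ∂μ = ∫ k, (k : ℝ) ∂μ' := by
    have key : ∀ ν : Measure ℕ, ∫ k, (k : ℝ) ∂ν = (∫⁻ k, (k : ℝ≥0∞) ∂ν).toReal := by
      intro ν
      rw [MeasureTheory.integral_eq_lintegral_of_nonneg_ae
        (Filter.Eventually.of_forall fun k => Nat.cast_nonneg k)
        measurable_from_nat.aestronglyMeasurable]
      congr 1
      exact lintegral_congr fun k => ENNReal.ofReal_natCast k
    rw [key, key, hmean]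
  -- discrete convexity gives monotone increments
  have hmono : ∀ a b : ℕ, a ≤ b → f (a + 1) - f a ≤ f (b + 1) - f b := by
    intro a b hab
    induction b, hab using Nat.le_induction with
    | base => exact le_refl _
    | succ b hab ih =>
      have := hconv b
      linarith
  -- the affine minorant
  have hline : ∀ k : ℕ, L k ≤ f k := by
    have aux1 : ∀ d : ℕ, f ℓ + Δ * d ≤ f (ℓ + d) := by
      intro d
      induction d with
      | zero => simp
      | succ d ih =>
        have h1 := hmono ℓ (ℓ + d) (Nat.le_add_right _ _)
        have h2 : ℓ + (d + 1) = (ℓ + d) + 1 := by omega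
        rw [h2]
        push_cast
        push_cast at ih
        linarith
    have aux2 : ∀ d : ℕ, d ≤ ℓ → f ℓ - Δ * d ≤ f (ℓ - d) := by
      intro d
      induction d with
      | zero => intro _; simp
      | succ d ih =>
        intro hd
        have hd' : d ≤ ℓ := by omega
        have h1 := hmono (ℓ - (d + 1)) ℓ (Nat.sub_le _ _)
        have h2 : (ℓ - (d + 1)) + 1 = ℓ - d := by omega
        rw [h2] at h1
        have := ih hd'
        push_cast
        linarith
    intro k
    rcases le_or_gt ℓ k with h | h
    · obtain ⟨d, rfl⟩ := Nat.exists_eq_add_of_le h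
      have := aux1 d
      simp only [hL]
      push_cast
      push_cast at this
      linarith
    · have hd : ℓ - (ℓ - k) = k := by omega
      have := aux2 (ℓ - k) (Nat.sub_le _ _)
      rw [hd] at this
      have hc : ((ℓ - k : ℕ) : ℝ) = (ℓ : ℝ) - (k : ℝ) := by
        have : k ≤ ℓ := h.le
        push_cast [this]
        ring
      rw [hc] at this
      simp only [hL]
      linarith
  -- f agrees with L almost everywhere under μ'
  have hS : μ' ({ℓ, ℓ + 1} : Set ℕ)ᶜ = 0 := by
    have h1 : ({ℓ, ℓ + 1} : Set ℕ)ᶜ = ⋃ i ∈ ({ℓ, ℓ + 1} : Set ℕ)ᶜ, ({i} : Set ℕ) :=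
      (Set.biUnion_of_singleton _).symm
    rw [h1]
    refine (measure_biUnion_null_iff (Set.to_countable _)).2 fun i hi => ?_
    simp only [Set.mem_compl_iff, Set.mem_insert_iff, Set.mem_singleton_iff, not_or] at hi
    exact hsupp i hi.1 hi.2
  have hae : f =ᵐ[μ'] L := by
    rw [Filter.eventuallyEq_iff_exists_mem]
    refine ⟨({ℓ, ℓ + 1} : Set ℕ), ?_, ?_⟩
    · rw [mem_ae_iff]; exact hS
    · intro k hk
      simp only [Set.mem_insert_iff, Set.mem_singleton_iff] at hk
      rcases hk with rfl | rfl
      · simp [hL]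
      · simp only [hL, hΔ]
        push_cast
        ring
  -- integrals of the affine function
  have hLi : Integrable L μ := (integrable_const _).add (hNi.const_mul Δ)
  have hLi' : Integrable L μ' := (integrable_const _).add (hNi'.const_mul Δ)
  have hIL : ∫ k, L k ∂μ = (f ℓ - Δ * ℓ) + Δ * ∫ k, (k : ℝ) ∂μ := by
    simp only [hL]
    rw [integral_add (integrable_const _) (hNi.const_mul Δ), MeasureTheory.integral_const_mul, integral_const]
    simp [measure_univ]
  have hIL' : ∫ k, L k ∂μ' = (f ℓ - Δ * ℓ) + Δ * ∫ k, (k : ℝ) ∂μ' := by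
    simp only [hL]
    rw [integral_add (integrable_const _) (hNi'.const_mul Δ), MeasureTheory.integral_const_mul, integral_const]
    simp [measure_univ]
  calc ∫ k, f k ∂μ' = ∫ k, L k ∂μ' := integral_congr_ae hae
    _ = ∫ k, L k ∂μ := by rw [hIL', hIL, hmeq]
    _ ≤ ∫ k, f k ∂μ := integral_mono hLi (hfi μ) hline
lemma swap_coord (μ μ' : Measure ℕ) [IsProbabilityMeasure μ] [IsProbabilityMeasure μ']
    (hfin : ∫⁻ k, (k : ℝ≥0∞) ∂μ ≠ ⊤)
    (hmean : ∫⁻ k, (k : ℝ≥0∞) ∂μ = ∫⁻ k, (k : ℝ≥0∞) ∂μ')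
    (ℓ : ℕ) (hsupp : ∀ i : ℕ, i ≠ ℓ → i ≠ ℓ + 1 → μ' {i} = 0)
    (m : ℕ) (g : (Fin (m + 1) → ℕ) → ℝ) (C : ℝ) (hb : ∀ w, |g w| ≤ C)
    (hconv : ∀ (w : Fin (m + 1) → ℕ) (i : Fin (m + 1)) (k : ℕ),
      2 * g (Function.update w i (k + 1))
        ≤ g (Function.update w i k) + g (Function.update w i (k + 2)))
    (κ κ' : Fin (m + 1) → Measure ℕ)
    (hκp : ∀ i, IsProbabilityMeasure (κ i)) (hκ'p : ∀ i, IsProbabilityMeasure (κ' i))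
    (i : Fin (m + 1)) (hi : κ i = μ) (hi' : κ' i = μ') (hoth : ∀ j, j ≠ i → κ j = κ' j) :
    ∫ w, g w ∂(Measure.pi κ') ≤ ∫ w, g w ∂(Measure.pi κ) := by
  haveI : ∀ j, SigmaFinite (κ j) := fun j => by haveI := hκp j; infer_instance
  haveI : ∀ j, SigmaFinite (κ' j) := fun j => by haveI := hκ'p j; infer_instance
  set e := MeasurableEquiv.piFinSuccAbove (fun _ : Fin (m + 1) => ℕ) i with he
  set ν : Measure (Fin m → ℕ) := Measure.pi (fun j => κ (i.succAbove j)) with hν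
  haveI : IsProbabilityMeasure ν := by
    haveI : ∀ j : Fin m, IsProbabilityMeasure (κ (i.succAbove j)) := fun j => hκp _
    exact MeasureTheory.Measure.pi.instIsProbabilityMeasure _
  have htails : (fun j : Fin m => κ' (i.succAbove j)) = fun j => κ (i.succAbove j) :=
    funext fun j => (hoth _ (Fin.succAbove_ne i j)).symm
  -- Fubini decomposition for both product measures
  have hMP : MeasurePreserving e (Measure.pi κ) ((κ i).prod ν) :=
    measurePreserving_piFinSuccAbove κ i
  have hMP' : MeasurePreserving e (Measure.pi κ') ((κ' i).prod ν) := by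
    have := measurePreserving_piFinSuccAbove κ' i
    rwa [htails, ← hν] at this
  have hmeas : Measurable fun y : ℕ × (Fin m → ℕ) => g (e.symm y) := measurable_of_countable _
  have hGi : ∀ (ρ : Measure ℕ) [IsProbabilityMeasure ρ],
      Integrable (fun y : ℕ × (Fin m → ℕ) => g (e.symm y)) (ρ.prod ν) := by
    intro ρ _
    exact (integrable_const C).mono' hmeas.aestronglyMeasurable
      (Filter.Eventually.of_forall fun y => by rw [Real.norm_eq_abs]; exact hb _)
  have hdec : ∀ (κ'' : Fin (m + 1) → Measure ℕ) (_ : ∀ j, IsProbabilityMeasure (κ'' j))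
      (_ : MeasurePreserving e (Measure.pi κ'') ((κ'' i).prod ν)),
      ∫ w, g w ∂(Measure.pi κ'') = ∫ k, ∫ y, g (e.symm (k, y)) ∂ν ∂(κ'' i) := by
    intro κ'' hp MP
    haveI := hp i
    have h1 : ∫ x, g (e.symm (e x)) ∂(Measure.pi κ'')
        = ∫ y, g (e.symm y) ∂((κ'' i).prod ν) :=
      MP.integral_comp e.measurableEmbedding (fun y => g (e.symm y))
    simp only [MeasurableEquiv.symm_apply_apply] at h1
    rw [h1, MeasureTheory.integral_prod _ (hGi (κ'' i))]
  rw [hdec κ hκp hMP, hdec κ' hκ'p hMP', hi, hi']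
  -- the inner integral as a function of the value in coordinate i
  set F : ℕ → ℝ := fun k => ∫ y, g (e.symm (k, y)) ∂ν with hF
  have hup : ∀ (k : ℕ) (y : Fin m → ℕ),
      e.symm (k, y) = Function.update (e.symm (0, y)) i k := by
    intro k y
    have h1 : ∀ k : ℕ, e.symm (k, y) = i.insertNth k y := fun _ => rfl
    rw [h1, h1]
    funext j
    by_cases hj : j = i
    · subst hj
      rw [Fin.insertNth_apply_same, Function.update_self]
    · obtain ⟨l, rfl⟩ := Fin.exists_succAbove_eq hj
      rw [Fin.insertNth_apply_succAbove, Function.update_of_ne (Fin.succAbove_ne i l),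
        Fin.insertNth_apply_succAbove]
  have hGik : ∀ k : ℕ, Integrable (fun y => g (e.symm (k, y))) ν :=
    fun k => (integrable_const C).mono' (measurable_of_countable _).aestronglyMeasurable
      (Filter.Eventually.of_forall fun y => by rw [Real.norm_eq_abs]; exact hb _)
  have hFb : ∀ k, |F k| ≤ C := by
    intro k
    rw [← Real.norm_eq_abs]
    have := MeasureTheory.norm_integral_le_of_norm_le_const
      (f := fun y => g (e.symm (k, y))) (μ := ν) (C := C)
      (Filter.Eventually.of_forall fun y => by rw [Real.norm_eq_abs]; exact hb _)
    simpa [measure_univ] using this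
  have hFconv : ∀ k, 2 * F (k + 1) ≤ F k + F (k + 2) := by
    intro k
    have h2 : 2 * F (k + 1) = ∫ y, 2 * g (e.symm (k + 1, y)) ∂ν := by
      rw [MeasureTheory.integral_const_mul]
    have h3 : F k + F (k + 2) = ∫ y, (g (e.symm (k, y)) + g (e.symm (k + 2, y))) ∂ν := by
      rw [integral_add (hGik k) (hGik (k + 2))]
    rw [h2, h3]
    refine integral_mono ((hGik (k + 1)).const_mul 2) ((hGik k).add (hGik (k + 2))) ?_
    intro y
    simp only
    rw [hup (k + 1) y, hup k y, hup (k + 2) y]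
    exact hconv _ i k
  exact single_coord μ μ' hfin hmean ℓ hsupp F C hFb hFconv

/-- Among offspring laws with a given mean, the one supported on two consecutive
integers requires on average the fewest heaps (deterministic labels, i.i.d. lives). -/
theorem iid_lives_mean_comparison
    (μ μ' : Measure ℕ) [IsProbabilityMeasure μ] [IsProbabilityMeasure μ']
    (hμ0 : μ {0} = 0) (hμ'0 : μ' {0} = 0)
    (hfin : ∫⁻ k, (k : ℝ≥0∞) ∂μ ≠ ⊤)
    (hmean : ∫⁻ k, (k : ℝ≥0∞) ∂μ = ∫⁻ k, (k : ℝ≥0∞) ∂μ')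
    (ℓ : ℕ) (hℓ : 1 ≤ ℓ) (hsupp : ∀ i : ℕ, i ≠ ℓ → i ≠ ℓ + 1 → μ' {i} = 0)
    (n : ℕ) (hn : 1 ≤ n) (u : Fin n → ℝ)
    (hu : ∀ i, u i ∈ Set.Ioo (0 : ℝ) 1) (huinj : Function.Injective u) :
    ∫ w : Fin n → ℕ, (R ((List.finRange n).map fun i => (u i, w i)) : ℝ)
        ∂(Measure.pi fun _ : Fin n => μ')
      ≤ ∫ w : Fin n → ℕ, (R ((List.finRange n).map fun i => (u i, w i)) : ℝ)
          ∂(Measure.pi fun _ : Fin n => μ) := by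
  obtain ⟨m, rfl⟩ : ∃ m, n = m + 1 := ⟨n - 1, by omega⟩
  set g : (Fin (m + 1) → ℕ) → ℝ :=
    fun w => (R ((List.finRange (m + 1)).map fun i => (u i, w i)) : ℝ) with hg
  have hb : ∀ w, |g w| ≤ ((m + 1 : ℕ) : ℝ) := by
    intro w
    rw [abs_of_nonneg (Nat.cast_nonneg _)]
    have h1 := R_le_length ((List.finRange (m + 1)).map fun i => (u i, w i))
    rw [List.length_map, List.length_finRange] at h1
    simp only [hg]
    exact_mod_cast h1
  have hconv : ∀ (w : Fin (m + 1) → ℕ) (i : Fin (m + 1)) (k : ℕ),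
      2 * g (Function.update w i (k + 1))
        ≤ g (Function.update w i k) + g (Function.update w i (k + 2)) := by
    intro w i k
    have := R_update_convex huinj w i k
    simp only [hg]
    exact_mod_cast this
  set κ : ℕ → Fin (m + 1) → Measure ℕ := fun t i => if (i : ℕ) < t then μ else μ' with hκ
  have hκp : ∀ t i, IsProbabilityMeasure (κ t i) := fun t i => by
    simp only [hκ]; split <;> infer_instance
  have hchain : ∀ t : ℕ,
      ∫ w, g w ∂(Measure.pi (κ 0)) ≤ ∫ w, g w ∂(Measure.pi (κ t)) := by
    intro t
    induction t with
    | zero => exact le_rfl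
    | succ t ih =>
      rcases lt_or_ge t (m + 1) with ht | ht
      · refine le_trans ih ?_
        refine swap_coord μ μ' hfin hmean ℓ hsupp m g _ hb hconv (κ (t + 1)) (κ t)
          (hκp _) (hκp _) ⟨t, ht⟩ (by simp [hκ]) (by simp [hκ]) ?_
        intro j hj
        have hjt : (j : ℕ) ≠ t := fun h => hj (Fin.ext h)
        simp only [hκ]
        have : ((j : ℕ) < t + 1) ↔ ((j : ℕ) < t) := by omega
        exact if_congr this rfl rfl
      · have heq : κ (t + 1) = κ t := funext fun i => by
          simp only [hκ]
          have hi := i.isLt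
          rw [if_pos (by omega), if_pos (by omega)]
        rw [heq]
        exact ih
  have h0 : κ 0 = fun _ => μ' := funext fun i => by simp [hκ]
  have hn' : κ (m + 1) = fun _ => μ := funext fun i => by simp [hκ, i.isLt]
  have hfin' := hchain (m + 1)
  rw [h0, hn'] at hfin'
  exact hfin'


end HeapPatience
end
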